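/- arXiv:1501.05268 — 15 statements merged into one kernel-verified Lean document; each statement's English description precedes it below -/
import Mathlib

section
/- Lemma 2.2: Let X be a set and h_1,…,h_r : X → ℝ fixed functions whose ranges are pairwise disjoint, i.e., h_i(X) ∩ h_j(X) = ∅ for all i ≠ j. Then a function f : X → ℝ belongs to B(h_1,…,h_r;X) if and only if G_{p,λ}(f) = 0 for every closed path–vector pair ⟨p,λ⟩ of X. -/
open scoped Classical

/-- `⟨p, lam⟩` is a closed path–vector pair with respect to the functions `h i`:
`p` is a nonempty finite set of (distinct) points, the weights `lam` are nonzero on `p`,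
and for every index `i` and every value `t`, the weights over the level set
`{x ∈ p | h i x = t}` sum to zero. -/
def ClosedPathPair {α : Type*} {r : ℕ} (h : Fin r → α → ℝ)
    (p : Finset α) (lam : α → ℝ) : Prop :=
  p.Nonempty ∧ (∀ x ∈ p, lam x ≠ 0) ∧
    ∀ (i : Fin r) (t : ℝ), ∑ x ∈ p.filter (fun x => h i x = t), lam x = 0

/-- `p` is a closed path with respect to the functions `h i`. -/
def IsClosedPath {α : Type*} {r : ℕ} (h : Fin r → α → ℝ) (p : Finset α) : Prop :=
  ∃ lam : α → ℝ, ClosedPathPair h p lam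

/-- `p` is a minimal closed path: it is a closed path and no proper subset of it is one. -/
def IsMinimalClosedPath {α : Type*} {r : ℕ} (h : Fin r → α → ℝ) (p : Finset α) : Prop :=
  IsClosedPath h p ∧ ∀ q ⊂ p, ¬ IsClosedPath h q

/-- Lemma 2.2: if the ranges of `h_1,…,h_r` are pairwise disjoint, then `f` belongs to
`B(h_1,…,h_r;X)` iff `G_{p,λ}(f) = 0` for every closed path–vector pair `⟨p,λ⟩`. -/
theorem mem_superpositions_iff_of_disjoint_ranges {X : Type*} {r : ℕ} (h : Fin r → X → ℝ)
    (hdisj : ∀ i j : Fin r, i ≠ j → ∀ x y : X, h i x ≠ h j y)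
    (f : X → ℝ) :
    (∃ g : Fin r → ℝ → ℝ, ∀ x, f x = ∑ i, g i (h i x)) ↔
      ∀ (p : Finset X) (lam : X → ℝ), ClosedPathPair h p lam →
        ∑ x ∈ p, lam x * f x = 0 := by
  constructor
  · rintro ⟨g, hg⟩ p lam ⟨-, -, hsum⟩
    calc ∑ x ∈ p, lam x * f x
        = ∑ i : Fin r, ∑ x ∈ p, lam x * g i (h i x) := by
          simp_rw [hg, Finset.mul_sum]
          rw [Finset.sum_comm]
      _ = 0 := by
          refine Finset.sum_eq_zero fun i _ => ?_
          rw [← Finset.sum_fiberwise_of_maps_to (g := h i) (t := p.image (h i))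
            (fun x hx => Finset.mem_image_of_mem _ hx)]
          refine Finset.sum_eq_zero fun t _ => ?_
          have : ∑ x ∈ p.filter (fun x => h i x = t), lam x * g i (h i x)
              = ∑ x ∈ p.filter (fun x => h i x = t), lam x * g i t := by
            refine Finset.sum_congr rfl fun x hx => ?_
            rw [(Finset.mem_filter.1 hx).2]
          rw [this, ← Finset.sum_mul, hsum i t, zero_mul]
  · intro H
    -- linear-algebra argument
    set V := X →₀ ℝ
    set W := (Fin r × ℝ) →₀ ℝ
    let T : V →ₗ[ℝ] W :=
      Finsupp.lsum ℝ (fun x : X => ∑ i : Fin r, Finsupp.lsingle (i, h i x))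
    let L : V →ₗ[ℝ] ℝ := Finsupp.linearCombination ℝ f
    have hTapply : ∀ (μ : V) (i : Fin r) (t : ℝ),
        T μ (i, t) = ∑ x ∈ μ.support.filter (fun x => h i x = t), μ x := by
      intro μ i t
      have : T μ = ∑ x ∈ μ.support, ∑ i' : Fin r, Finsupp.single (i', h i' x) (μ x) := by
        rw [show T μ = _ from Finsupp.lsum_apply _ _ _, Finsupp.sum]
        refine Finset.sum_congr rfl fun x _ => ?_
        simp [Finsupp.lsingle_apply]
      rw [this]
      rw [Finset.sum_apply']
      rw [Finset.sum_filter]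
      refine Finset.sum_congr rfl fun x _ => ?_
      rw [Finset.sum_apply']
      simp only [Finsupp.single_apply, Prod.mk.injEq]
      rw [Finset.sum_congr rfl (fun i' _ => ?_), Finset.sum_ite_eq' Finset.univ i
        (fun _ => if h i x = t then μ x else 0)]
      · simp
      · by_cases hii : i' = i <;> by_cases ht : h i' x = t <;> simp [hii, ht]
    have hker : LinearMap.ker T ≤ LinearMap.ker L := by
      intro μ hμ
      simp only [LinearMap.mem_ker] at hμ ⊢
      by_cases hμ0 : μ = 0
      · simp [hμ0]
      have hpair : ClosedPathPair h μ.support μ := by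
        refine ⟨Finsupp.support_nonempty_iff.2 hμ0, fun x hx => Finsupp.mem_support_iff.1 hx,
          fun i t => ?_⟩
        rw [← hTapply μ i t, hμ]
        rfl
      have := H μ.support μ hpair
      rw [Finsupp.linearCombination_apply, Finsupp.sum]
      simpa [smul_eq_mul] using this
    let Lbar : (V ⧸ LinearMap.ker T) →ₗ[ℝ] ℝ := (LinearMap.ker T).liftQ L hker
    let G₀ : LinearMap.range T →ₗ[ℝ] ℝ := Lbar.comp (T.quotKerEquivRange.symm : _ →ₗ[ℝ] _)
    obtain ⟨G, hG⟩ := G₀.exists_extend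
    refine ⟨fun i t => G (Finsupp.single (i, t) 1), fun x => ?_⟩
    have h1 : T (Finsupp.single x 1) = ∑ i : Fin r, Finsupp.single (i, h i x) 1 := by
      rw [show T (Finsupp.single x 1) = _ from Finsupp.lsum_single _ _ _ _]
      simp [Finsupp.lsingle_apply]
    have h2 : G (T (Finsupp.single x 1)) = L (Finsupp.single x 1) := by
      have hmem : T (Finsupp.single x 1) ∈ LinearMap.range T := ⟨_, rfl⟩
      have : G (T (Finsupp.single x 1)) = G₀ ⟨T (Finsupp.single x 1), hmem⟩ := by
        rw [← hG]; rfl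
      rw [this]
      show Lbar (T.quotKerEquivRange.symm ⟨T (Finsupp.single x 1), hmem⟩) = _
      rw [T.quotKerEquivRange_symm_apply_image]
      rfl
    have h3 : L (Finsupp.single x 1) = f x := by
      rw [show L (Finsupp.single x 1) = _ from Finsupp.linearCombination_single ..]; simp
    rw [← h3, ← h2, h1, map_sum]
end

section
/- Lemma 2.4: Let X be a set and h_1,…,h_r : X → ℝ fixed functions, and let ⟨p,λ⟩ be a closed path–vector pair of X. Then there exist minimal closed paths p_1,…,p_k contained in p, vectors λ^(1),…,λ^(k) of nonzero reals making ⟨p_1,λ^(1)⟩,…,⟨p_k,λ^(k)⟩ closed path–vector pairs, and real coefficients c_1,…,c_k, such that G_{p,λ}(f) = Σ_{s=1}^k c_s G_{p_s,λ^(s)}(f) for every function f : X → ℝ. -/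
open scoped Classical

private lemma aux_lincomb {X : Type*} {r : ℕ} (h : Fin r → X → ℝ) :
    ∀ n (p : Finset X), p.card ≤ n → ∀ lam : X → ℝ,
      (∀ x ∈ p, lam x ≠ 0) →
      (∀ (i : Fin r) (t : ℝ), ∑ x ∈ p.filter (fun x => h i x = t), lam x = 0) →
      ∃ (k : ℕ) (q : Fin k → Finset X) (mu : Fin k → X → ℝ) (c : Fin k → ℝ),
        (∀ s, q s ⊆ p) ∧ (∀ s, IsMinimalClosedPath h (q s)) ∧
        (∀ s, ClosedPathPair h (q s) (mu s)) ∧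
        ∀ f : X → ℝ, ∑ x ∈ p, lam x * f x = ∑ s, c s * ∑ x ∈ q s, mu s x * f x := by
  intro n
  induction n with
  | zero =>
    intro p hcard lam _ _
    have hpe : p = ∅ := Finset.card_eq_zero.mp (Nat.le_zero.mp hcard)
    subst hpe
    exact ⟨0, Fin.elim0, Fin.elim0, Fin.elim0, fun s => s.elim0, fun s => s.elim0,
      fun s => s.elim0, fun f => by simp⟩
  | succ n ih =>
    intro p hcard lam hne hsum
    rcases p.eq_empty_or_nonempty with rfl | hpne
    · exact ⟨0, Fin.elim0, Fin.elim0, Fin.elim0, fun s => s.elim0, fun s => s.elim0,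
        fun s => s.elim0, fun f => by simp⟩
    have hcp : ClosedPathPair h p lam := ⟨hpne, hne, hsum⟩
    by_cases hmin : IsMinimalClosedPath h p
    · exact ⟨1, fun _ => p, fun _ => lam, fun _ => 1, fun _ => le_refl _, fun _ => hmin,
        fun _ => hcp, fun f => by simp⟩
    · have hnotmin : ∃ q0, q0 ⊂ p ∧ IsClosedPath h q0 := by
        by_contra hc
        push_neg at hc
        exact hmin ⟨⟨lam, hcp⟩, fun q hq => hc q hq⟩
      obtain ⟨q0, hq0p, hic⟩ := hnotmin
      obtain ⟨mu, hq0cp⟩ := hic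
      obtain ⟨x0, hx0q⟩ := hq0cp.1
      have hx0p : x0 ∈ p := hq0p.subset hx0q
      have hmux0 : mu x0 ≠ 0 := hq0cp.2.1 x0 hx0q
      set c0 : ℝ := lam x0 / mu x0 with hc0
      set g : X → ℝ := fun x => if x ∈ q0 then mu x else 0 with hg
      set lam' : X → ℝ := fun x => lam x - c0 * g x with hlam'
      set p' : Finset X := p.filter (fun x => lam' x ≠ 0) with hp'def
      have hp'sub : p' ⊆ p := Finset.filter_subset _ _
      have hx0not : x0 ∉ p' := by
        simp only [hp'def, Finset.mem_filter, not_and, not_not]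
        intro _
        simp [hlam', hg, hx0q, hc0, div_mul_cancel₀ _ hmux0]
      have hp'ssub : p' ⊂ p := ⟨hp'sub, fun hs => hx0not (hs hx0p)⟩
      have hcard' : p'.card ≤ n :=
        Nat.lt_succ_iff.mp (lt_of_lt_of_le (Finset.card_lt_card hp'ssub) hcard)
      have hcardq : q0.card ≤ n :=
        Nat.lt_succ_iff.mp (lt_of_lt_of_le (Finset.card_lt_card hq0p) hcard)
      -- sum of g over filtered p equals sum of mu over filtered q0
      have hgsum : ∀ (P : X → Prop) (F : X → ℝ) [DecidablePred P],
          ∑ x ∈ p.filter P, g x * F x = ∑ x ∈ q0.filter P, mu x * F x := by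
        intro P F _
        have : ∀ x, g x * F x = if x ∈ q0 then mu x * F x else 0 := by
          intro x; simp [hg, ite_mul]
        simp only [this]
        rw [Finset.sum_ite_mem]
        congr 1
        ext x
        simp only [Finset.mem_inter, Finset.mem_filter]
        constructor
        · rintro ⟨⟨_, hP⟩, hq⟩; exact ⟨hq, hP⟩
        · rintro ⟨hq, hP⟩; exact ⟨⟨hq0p.subset hq, hP⟩, hq⟩
      -- lam' is a valid weight system on p'
      have hne' : ∀ x ∈ p', lam' x ≠ 0 := fun x hx => (Finset.mem_filter.mp hx).2
      have hsum' : ∀ (i : Fin r) (t : ℝ),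
          ∑ x ∈ p'.filter (fun x => h i x = t), lam' x = 0 := by
        intro i t
        have h1 : p'.filter (fun x => h i x = t)
            = (p.filter (fun x => h i x = t)).filter (fun x => lam' x ≠ 0) := by
          rw [hp'def, Finset.filter_comm]
        rw [h1, Finset.sum_filter_ne_zero]
        have h2 : ∑ x ∈ p.filter (fun x => h i x = t), lam' x
            = ∑ x ∈ p.filter (fun x => h i x = t), lam x
              - c0 * ∑ x ∈ p.filter (fun x => h i x = t), g x := by
          rw [Finset.mul_sum, ← Finset.sum_sub_distrib]
        have h3 : ∑ x ∈ p.filter (fun x => h i x = t), g x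
            = ∑ x ∈ q0.filter (fun x => h i x = t), mu x := by
          have := hgsum (fun x => h i x = t) (fun _ => 1)
          simpa using this
        rw [h2, h3, hsum i t, hq0cp.2.2 i t]
        ring
      obtain ⟨k1, q1, mu1, c1, hsub1, hmin1, hcp1, heq1⟩ := ih q0 hcardq mu hq0cp.2.1 hq0cp.2.2
      obtain ⟨k2, q2, mu2, c2, hsub2, hmin2, hcp2, heq2⟩ := ih p' hcard' lam' hne' hsum'
      refine ⟨k1 + k2, Fin.addCases q1 q2, Fin.addCases mu1 mu2,
        Fin.addCases (fun i => c0 * c1 i) c2, ?_, ?_, ?_, ?_⟩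
      · intro s
        refine Fin.addCases (motive := fun s => Fin.addCases q1 q2 s ⊆ p) ?_ ?_ s
        · intro i; rw [Fin.addCases_left]; exact (hsub1 i).trans hq0p.subset
        · intro j; rw [Fin.addCases_right]; exact (hsub2 j).trans hp'sub
      · intro s
        refine Fin.addCases (motive := fun s => IsMinimalClosedPath h (Fin.addCases q1 q2 s)) ?_ ?_ s
        · intro i; rw [Fin.addCases_left]; exact hmin1 i
        · intro j; rw [Fin.addCases_right]; exact hmin2 j
      · intro s
        refine Fin.addCases (motive := fun s =>
          ClosedPathPair h (Fin.addCases q1 q2 s) (Fin.addCases mu1 mu2 s)) ?_ ?_ s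
        · intro i; rw [Fin.addCases_left, Fin.addCases_left]; exact hcp1 i
        · intro j; rw [Fin.addCases_right, Fin.addCases_right]; exact hcp2 j
      · intro f
        have hdecomp : ∑ x ∈ p, lam x * f x
            = c0 * ∑ x ∈ q0, mu x * f x + ∑ x ∈ p', lam' x * f x := by
          have h1 : ∑ x ∈ p, lam' x * f x
              = ∑ x ∈ p, lam x * f x - c0 * ∑ x ∈ p, g x * f x := by
            rw [Finset.mul_sum, ← Finset.sum_sub_distrib]
            apply Finset.sum_congr rfl
            intro x _
            simp [hlam']; ring
          have h2 : ∑ x ∈ p, g x * f x = ∑ x ∈ q0, mu x * f x := by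
            have := hgsum (fun _ => True) f
            simpa using this
          have h3 : ∑ x ∈ p', lam' x * f x = ∑ x ∈ p, lam' x * f x := by
            apply Finset.sum_subset hp'sub
            intro x hx hx'
            have : lam' x = 0 := by
              by_contra hcon
              exact hx' (Finset.mem_filter.mpr ⟨hx, hcon⟩)
            rw [this, zero_mul]
          rw [h3, h1, h2]
          ring
        rw [hdecomp, heq1 f, heq2 f, Fin.sum_univ_add]
        simp only [Fin.addCases_left, Fin.addCases_right]
        rw [Finset.mul_sum]
        ring_nf

/-- Lemma 2.4: `G_{p,λ}` is a linear combination of functionals associated with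
minimal closed paths contained in `p`. -/
theorem functional_eq_lincomb_of_minimal {X : Type*} {r : ℕ} (h : Fin r → X → ℝ)
    (p : Finset X) (lam : X → ℝ) (hp : ClosedPathPair h p lam) :
    ∃ (k : ℕ) (q : Fin k → Finset X) (mu : Fin k → X → ℝ) (c : Fin k → ℝ),
      (∀ s, q s ⊆ p) ∧
      (∀ s, IsMinimalClosedPath h (q s)) ∧
      (∀ s, ClosedPathPair h (q s) (mu s)) ∧
      ∀ f : X → ℝ, ∑ x ∈ p, lam x * f x = ∑ s, c s * ∑ x ∈ q s, mu s x * f x :=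
  aux_lincomb h p.card p le_rfl lam hp.2.1 hp.2.2
end

section
/- Theorem 2.5, part 1: Let X be a set and h_1,…,h_r : X → ℝ fixed functions. A function f : X → ℝ belongs to B(h_1,…,h_r;X) if and only if for every minimal closed path p = {x_1,…,x_n} ⊆ X with respect to h_1,…,h_r and every vector λ = (λ_1,…,λ_n) of nonzero reals making ⟨p,λ⟩ a closed path–vector pair, one has Σ_{j=1}^n λ_j f(x_j) = 0. -/
open scoped Classical

/-- The fiber-sum-zero condition, without nonemptiness or nonvanishing of weights. -/
def ZeroFibers {α : Type*} {r : ℕ} (h : Fin r → α → ℝ) (p : Finset α) (lam : α → ℝ) : Prop :=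
  ∀ (i : Fin r) (t : ℝ), ∑ x ∈ p.filter (fun x => h i x = t), lam x = 0

/-- Every closed path contains a minimal closed path. -/
lemma exists_minimal_closedPath {α : Type*} {r : ℕ} (h : Fin r → α → ℝ) :
    ∀ p : Finset α, IsClosedPath h p → ∃ q, q ⊆ p ∧ IsMinimalClosedPath h q := by
  intro p
  induction p using Finset.strongInductionOn with
  | _ p ih =>
    intro hp
    by_cases hmin : ∀ q ⊂ p, ¬ IsClosedPath h q
    · exact ⟨p, subset_rfl, hp, hmin⟩
    · push_neg at hmin
      obtain ⟨q, hq, hqc⟩ := hmin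
      obtain ⟨q', h1, h2⟩ := ih q hq hqc
      exact ⟨q', h1.trans hq.subset, h2⟩

lemma sum_if_mem_mul {α : Type*} (q s : Finset α) (hqs : q ⊆ s) (mu F : α → ℝ) :
    ∑ x ∈ s, (if x ∈ q then mu x else 0) * F x = ∑ x ∈ q, mu x * F x := by
  rw [← Finset.sum_subset hqs (fun x _ hx => by simp [hx])]
  exact Finset.sum_congr rfl fun x hx => by simp [hx]

lemma sum_if_mem_filter {α : Type*} (q s : Finset α) (hqs : q ⊆ s) (mu : α → ℝ)
    (P : α → Prop) [DecidablePred P] :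
    ∑ x ∈ s.filter P, (if x ∈ q then mu x else 0) = ∑ x ∈ q.filter P, mu x := by
  rw [← Finset.sum_subset (Finset.filter_subset_filter P hqs) (fun x hx hx' => ?_)]
  · exact Finset.sum_congr rfl fun x hx => by
      simp [Finset.mem_of_mem_filter x hx]
  · have hxq : x ∉ q := fun hxq =>
      hx' (Finset.mem_filter.2 ⟨hxq, (Finset.mem_filter.1 hx).2⟩)
    simp [hxq]

/-- If `f` superposes, then any fiber-sum-zero weighting kills it. -/
lemma zeroFibers_sum_eq_zero {X : Type*} {r : ℕ} (h : Fin r → X → ℝ)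
    (g : Fin r → ℝ → ℝ) (p : Finset X) (lam : X → ℝ) (hz : ZeroFibers h p lam) :
    ∑ x ∈ p, lam x * (∑ i, g i (h i x)) = 0 := by
  have : ∑ x ∈ p, lam x * (∑ i, g i (h i x))
      = ∑ i : Fin r, ∑ x ∈ p, lam x * g i (h i x) := by
    rw [Finset.sum_comm]
    exact Finset.sum_congr rfl fun x _ => Finset.mul_sum _ _ _
  rw [this]
  refine Finset.sum_eq_zero fun i _ => ?_
  rw [← Finset.sum_fiberwise_of_maps_to (g := h i) (t := p.image (h i))
      (fun x hx => Finset.mem_image_of_mem _ hx)]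
  refine Finset.sum_eq_zero fun t _ => ?_
  have : ∑ x ∈ p.filter (fun x => h i x = t), lam x * g i (h i x)
      = ∑ x ∈ p.filter (fun x => h i x = t), lam x * g i t := by
    refine Finset.sum_congr rfl fun x hx => ?_
    rw [(Finset.mem_filter.1 hx).2]
  rw [this, ← Finset.sum_mul, hz i t, zero_mul]

/-- The hypothesis on minimal closed paths upgrades to all fiber-sum-zero weightings. -/
lemma zeroFibers_eval_zero {X : Type*} {r : ℕ} (h : Fin r → X → ℝ) (f : X → ℝ)
    (H : ∀ (p : Finset X) (lam : X → ℝ), IsMinimalClosedPath h p →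
      ClosedPathPair h p lam → ∑ x ∈ p, lam x * f x = 0) :
    ∀ (n : ℕ) (p : Finset X) (lam : X → ℝ), p.card ≤ n → ZeroFibers h p lam →
      ∑ x ∈ p, lam x * f x = 0 := by
  intro n
  induction n with
  | zero =>
    intro p lam hcard _
    rw [Finset.card_eq_zero.1 (Nat.le_zero.1 hcard), Finset.sum_empty]
  | succ n ih =>
    intro p lam hcard hz
    -- restrict to the support of lam inside p
    set p' : Finset X := p.filter (fun x => lam x ≠ 0) with hp'
    have hsub : p' ⊆ p := Finset.filter_subset _ _
    have hsum : ∑ x ∈ p, lam x * f x = ∑ x ∈ p', lam x * f x := by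
      refine (Finset.sum_subset hsub fun x hx hx' => ?_).symm
      have : lam x = 0 := by
        by_contra hne
        exact hx' (Finset.mem_filter.2 ⟨hx, hne⟩)
      rw [this, zero_mul]
    have hz' : ZeroFibers h p' lam := by
      intro i t
      rw [← hz i t]
      refine Finset.sum_subset (Finset.filter_subset_filter _ hsub) fun x hx hx' => ?_
      by_contra hne
      exact hx' (Finset.mem_filter.2 ⟨Finset.mem_filter.2
        ⟨(Finset.mem_filter.1 hx).1, hne⟩, (Finset.mem_filter.1 hx).2⟩)
    rcases Finset.eq_empty_or_nonempty p' with he | hne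
    · rw [hsum, he, Finset.sum_empty]
    have hpair : ClosedPathPair h p' lam :=
      ⟨hne, fun x hx => (Finset.mem_filter.1 hx).2, hz'⟩
    obtain ⟨q, hq, hqmin⟩ := exists_minimal_closedPath h p' ⟨lam, hpair⟩
    obtain ⟨mu, hmu⟩ := hqmin.1
    obtain ⟨x0, hx0⟩ := hmu.1
    have hx0p' : x0 ∈ p' := hq hx0
    have hmux0 : mu x0 ≠ 0 := hmu.2.1 x0 hx0
    set c : ℝ := lam x0 / mu x0 with hc
    set mu' : X → ℝ := fun x => if x ∈ q then mu x else 0 with hmu'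
    set lam2 : X → ℝ := fun x => lam x - c * mu' x with hlam2
    have hlam2x0 : lam2 x0 = 0 := by
      simp only [hlam2, hmu', hx0, if_true, hc]
      rw [div_mul_cancel₀ _ hmux0, sub_self]
    have hz2 : ZeroFibers h p' lam2 := by
      intro i t
      simp only [hlam2]
      rw [Finset.sum_sub_distrib, hz' i t, ← Finset.mul_sum,
        sum_if_mem_filter q p' hq mu _, hmu.2.2 i t, mul_zero, sub_zero]
    set p'' : Finset X := p'.erase x0 with hp''
    have hz3 : ZeroFibers h p'' lam2 := by
      intro i t
      rw [← hz2 i t]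
      refine Finset.sum_subset
        (Finset.filter_subset_filter _ (Finset.erase_subset x0 p')) fun x hx hx' => ?_
      have hxx0 : x = x0 := by
        by_contra hne
        exact hx' (Finset.mem_filter.2 ⟨Finset.mem_erase.2
          ⟨hne, (Finset.mem_filter.1 hx).1⟩, (Finset.mem_filter.1 hx).2⟩)
      rw [hxx0, hlam2x0]
    have hcard'' : p''.card ≤ n := by
      have h1 : p'.card ≤ n + 1 := le_trans (Finset.card_le_card hsub) hcard
      have h2 : p''.card = p'.card - 1 := Finset.card_erase_of_mem hx0p'
      omega
    have hsum2 : ∑ x ∈ p'', lam2 x * f x = 0 := ih p'' lam2 hcard'' hz3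
    have hsum2' : ∑ x ∈ p', lam2 x * f x = 0 := by
      rw [← Finset.sum_erase p' (a := x0) (f := fun x => lam2 x * f x)
        (by show lam2 x0 * f x0 = 0; rw [hlam2x0, zero_mul]), ← hp'', hsum2]
    have hsummu : ∑ x ∈ p', mu' x * f x = ∑ x ∈ q, mu x * f x :=
      sum_if_mem_mul q p' hq mu f
    have hmusum : ∑ x ∈ q, mu x * f x = 0 := H q mu hqmin hmu
    rw [hsum]
    calc ∑ x ∈ p', lam x * f x
        = ∑ x ∈ p', (lam2 x * f x + c * (mu' x * f x)) := by
          refine Finset.sum_congr rfl fun x _ => ?_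
          simp only [hlam2]; ring
      _ = ∑ x ∈ p', lam2 x * f x + c * ∑ x ∈ p', mu' x * f x := by
          rw [Finset.sum_add_distrib, Finset.mul_sum]
      _ = 0 := by rw [hsum2', hsummu, hmusum, mul_zero, add_zero]

/-- Theorem 2.5, part 1: `f ∈ B(h_1,…,h_r;X)` iff `G_{p,λ}(f) = 0` for every minimal
closed path `p` and every vector `λ` making `⟨p,λ⟩` a closed path–vector pair. -/
theorem mem_superpositions_iff_minimal_paths {X : Type*} {r : ℕ} (h : Fin r → X → ℝ)
    (f : X → ℝ) :
    (∃ g : Fin r → ℝ → ℝ, ∀ x, f x = ∑ i, g i (h i x)) ↔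
      ∀ (p : Finset X) (lam : X → ℝ), IsMinimalClosedPath h p →
        ClosedPathPair h p lam → ∑ x ∈ p, lam x * f x = 0 := by
  constructor
  · rintro ⟨g, hg⟩ p lam _ hpair
    have := zeroFibers_sum_eq_zero h g p lam hpair.2.2
    rw [← this]
    exact Finset.sum_congr rfl fun x _ => by rw [hg x]
  · intro H
    -- Linear-algebraic construction of the g i.
    set W := Fin r → (ℝ →₀ ℝ) with hW
    set T : (X →₀ ℝ) →ₗ[ℝ] W :=
      Finsupp.linearCombination ℝ (fun x i => Finsupp.single (h i x) 1) with hT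
    set F : (X →₀ ℝ) →ₗ[ℝ] ℝ := Finsupp.linearCombination ℝ f with hF
    have hker : LinearMap.ker T ≤ LinearMap.ker F := by
      intro l hl
      rw [LinearMap.mem_ker] at hl ⊢
      have hfib : ZeroFibers h l.support l := by
        intro i t
        have h0 : (T l) i t = 0 := by rw [hl]; rfl
        rw [hT, Finsupp.linearCombination_apply, Finsupp.sum] at h0
        have : (∑ x ∈ l.support, l x • fun i => Finsupp.single (h i x) (1:ℝ)) i t
            = ∑ x ∈ l.support, l x * (if h i x = t then 1 else 0) := by
          rw [Finset.sum_apply, Finset.sum_apply']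
          refine Finset.sum_congr rfl fun x _ => ?_
          simp [Finsupp.single_apply]
        rw [this] at h0
        rw [← h0, Finset.sum_filter]
        exact Finset.sum_congr rfl fun x _ => by split <;> simp [*]
      have := zeroFibers_eval_zero h f H l.support.card l.support l le_rfl hfib
      rw [hF, Finsupp.linearCombination_apply, Finsupp.sum, ← this]
      exact Finset.sum_congr rfl fun x _ => by rw [smul_eq_mul]
    -- factor F through the range of T
    set F' : ((X →₀ ℝ) ⧸ LinearMap.ker T) →ₗ[ℝ] ℝ :=
      Submodule.liftQ (LinearMap.ker T) F hker with hF'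
    set φ₀ : LinearMap.range T →ₗ[ℝ] ℝ :=
      F'.comp (T.quotKerEquivRange.symm : LinearMap.range T →ₗ[ℝ] _) with hφ₀
    obtain ⟨φ, hφ⟩ := LinearMap.exists_extend φ₀
    have hφT : ∀ v : X →₀ ℝ, φ (T v) = F v := by
      intro v
      have hmem : T v ∈ LinearMap.range T := LinearMap.mem_range_self T v
      have h1 : φ (T v) = φ₀ ⟨T v, hmem⟩ := by
        rw [← hφ]; rfl
      rw [h1, hφ₀, LinearMap.comp_apply]
      have h2 : T.quotKerEquivRange.symm ⟨T v, hmem⟩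
          = Submodule.Quotient.mk v := by
        rw [LinearEquiv.symm_apply_eq]
        exact Subtype.ext (T.quotKerEquivRange_apply_mk v)
      rw [LinearEquiv.coe_coe, h2]
      exact Submodule.liftQ_apply _ _ _
    refine ⟨fun i t => φ (Pi.single i (Finsupp.single t 1)), fun x => ?_⟩
    have h1 : f x = φ (T (Finsupp.single x 1)) := by
      rw [hφT, hF, Finsupp.linearCombination_single, one_smul]
    have h2 : T (Finsupp.single x 1) = fun i => Finsupp.single (h i x) (1:ℝ) := by
      rw [hT, Finsupp.linearCombination_single, one_smul]
    rw [h1, h2]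
    have h3 : (fun i => Finsupp.single (h i x) (1:ℝ))
        = ∑ i : Fin r, Pi.single i (Finsupp.single (h i x) (1:ℝ)) :=
      (Finset.univ_sum_single _).symm
    rw [h3, map_sum]
end

section
/- Theorem 2.5, part 2: Let X be a set and h_1,…,h_r : X → ℝ fixed functions. If X has no closed paths with respect to h_1,…,h_r, then B(h_1,…,h_r;X) = T(X); that is, every function f : X → ℝ can be written as f(x) = Σ_{i=1}^r g_i(h_i(x)) for some g_1,…,g_r : ℝ → ℝ. -/
open scoped Classical

/-- Theorem 2.5, part 2: if `X` has no closed paths, then every function on `X`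
is a linear superposition. -/
theorem superpositions_eq_all_of_no_closedPath {X : Type*} {r : ℕ} (h : Fin r → X → ℝ)
    (hX : ∀ p : Finset X, ¬ IsClosedPath h p) (f : X → ℝ) :
    ∃ g : Fin r → ℝ → ℝ, ∀ x, f x = ∑ i, g i (h i x) := by
  classical
  set v : X → ((Fin r × ℝ) →₀ ℝ) := fun x => ∑ i, Finsupp.single (i, h i x) 1 with hv
  set L : (X →₀ ℝ) →ₗ[ℝ] ((Fin r × ℝ) →₀ ℝ) := Finsupp.linearCombination ℝ v with hL
  have hLapp : ∀ (lam : X →₀ ℝ) (j : Fin r) (t : ℝ),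
      (L lam) (j, t) = ∑ x ∈ lam.support.filter (fun x => h j x = t), lam x := by
    intro lam j t
    rw [hL, Finsupp.linearCombination_apply, Finsupp.sum_apply, Finsupp.sum,
      Finset.sum_filter]
    refine Finset.sum_congr rfl fun x hx => ?_
    rw [Finsupp.smul_apply, hv]
    simp only [Finsupp.finset_sum_apply, Finsupp.single_apply, Prod.mk.injEq, ite_and,
      Finset.sum_ite_eq', Finset.mem_univ, if_true, smul_eq_mul]
    by_cases hc : h j x = t <;> simp [hc]
  have hker : LinearMap.ker L = ⊥ := by
    rw [LinearMap.ker_eq_bot']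
    intro lam hlam
    by_contra hne
    apply hX lam.support
    refine ⟨lam, Finsupp.support_nonempty_iff.2 hne,
      fun x hx => Finsupp.mem_support_iff.1 hx, fun j t => ?_⟩
    rw [← hLapp lam j t, hlam]
    rfl
  obtain ⟨M, hM⟩ := L.exists_leftInverse_of_injective hker
  set F : (X →₀ ℝ) →ₗ[ℝ] ℝ := Finsupp.linearCombination ℝ f with hF
  set G : ((Fin r × ℝ) →₀ ℝ) →ₗ[ℝ] ℝ := F.comp M with hG
  refine ⟨fun i t => G (Finsupp.single (i, t) 1), fun x => ?_⟩
  have h2 : L (Finsupp.single x 1) = v x := by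
    rw [hL, Finsupp.linearCombination_single, one_smul]
  have h3 : G (L (Finsupp.single x 1)) = F (Finsupp.single x 1) := by
    rw [hG, LinearMap.comp_apply, ← LinearMap.comp_apply M L, hM, LinearMap.id_apply]
  calc f x = F (Finsupp.single x 1) := by
        rw [hF, Finsupp.linearCombination_single, one_smul]
    _ = G (L (Finsupp.single x 1)) := h3.symm
    _ = G (v x) := by rw [h2]
    _ = ∑ i, G (Finsupp.single (i, h i x) 1) := by rw [hv]; exact map_sum G _ _
end

section
/- Theorem 2.6: Let X be a set and h_1,…,h_r : X → ℝ fixed functions. Then B(h_1,…,h_r;X) = T(X) (i.e., every function f : X → ℝ equals Σ_{i=1}^r g_i ∘ h_i for some g_1,…,g_r : ℝ → ℝ) if and only if X has no closed paths with respect to h_1,…,h_r. -/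
open scoped Classical

noncomputable section SuperAux

namespace SuperAux

variable {X : Type*} {r : ℕ} (h : Fin r → X → ℝ)

/-- The vector associated to a point `x`. -/
def v (x : X) : (Fin r × ℝ) →₀ ℝ := ∑ i, Finsupp.single (i, h i x) 1

lemma v_apply (x : X) (i : Fin r) (t : ℝ) :
    v h x (i, t) = if h i x = t then 1 else 0 := by
  classical
  simp only [v, Finsupp.finset_sum_apply, Finsupp.single_apply]
  rw [Finset.sum_eq_single i]
  · simp [Prod.ext_iff]
  · intro j _ hj
    simp [Prod.ext_iff, hj]
  · simp

lemma sum_smul_v_apply (s : Finset X) (lam : X → ℝ) (i : Fin r) (t : ℝ) :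
    (∑ x ∈ s, lam x • v h x) (i, t) = ∑ x ∈ s.filter (fun x => h i x = t), lam x := by
  classical
  rw [Finsupp.finset_sum_apply, Finset.sum_filter]
  refine Finset.sum_congr rfl fun x _ => ?_
  rw [Finsupp.smul_apply, v_apply, smul_eq_mul]
  by_cases hx : h i x = t <;> simp [hx]

/-- No closed paths implies the family `v` is linearly independent. -/
lemma li_of_noPath (H : ∀ p : Finset X, ¬ IsClosedPath h p) :
    LinearIndependent ℝ (v h) := by
  classical
  rw [linearIndependent_iff']
  intro s g hsum x hx
  by_contra hgx
  refine H (s.filter (fun y => g y ≠ 0)) ⟨g, ⟨x, ?_⟩, fun y hy => (Finset.mem_filter.mp hy).2, ?_⟩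
  · exact Finset.mem_filter.mpr ⟨hx, hgx⟩
  · intro i t
    have h0 : (∑ y ∈ s, g y • v h y) (i, t) = 0 := by rw [hsum]; rfl
    rw [sum_smul_v_apply] at h0
    rw [Finset.filter_comm]
    rw [Finset.sum_filter_ne_zero]
    exact h0

/-- Linear independence of `v` implies every function is a superposition. -/
lemma rep_of_li (li : LinearIndependent ℝ (v h)) (f : X → ℝ) :
    ∃ g : Fin r → ℝ → ℝ, ∀ x, f x = ∑ i, g i (h i x) := by
  classical
  have hinj : Function.Injective (v h) := li.injective
  have li' : LinearIndepOn ℝ id (Set.range (v h)) :=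
    (linearIndepOn_id_range_iff hinj).mpr li
  let B := Module.Basis.extend li'
  -- the value to assign to a basis vector
  let F : ((Fin r × ℝ) →₀ ℝ) → ℝ := fun w =>
    if hw : ∃ x, v h x = w then f hw.choose else 0
  let φ : ((Fin r × ℝ) →₀ ℝ) →ₗ[ℝ] ℝ := B.constr ℝ (fun b => F (b : (Fin r × ℝ) →₀ ℝ))
  refine ⟨fun i t => φ (Finsupp.single (i, t) 1), fun x => ?_⟩
  have hmem : v h x ∈ li'.extend (Set.subset_univ _) :=
    li'.subset_extend _ ⟨x, rfl⟩
  have hB : φ (v h x) = F (v h x) := by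
    have := Module.Basis.constr_basis B ℝ (fun b => F (b : (Fin r × ℝ) →₀ ℝ)) ⟨v h x, hmem⟩
    rwa [Module.Basis.extend_apply_self] at this
  have hF : F (v h x) = f x := by
    have hex : ∃ y, v h y = v h x := ⟨x, rfl⟩
    have : hex.choose = x := hinj hex.choose_spec
    simp only [F, dif_pos hex, this]
  have : φ (v h x) = ∑ i, φ (Finsupp.single (i, h i x) 1) := by
    rw [v, map_sum]
  rw [← this, hB, hF]

/-- A closed path obstructs representability. -/
lemma noPath_of_rep
    (H : ∀ f : X → ℝ, ∃ g : Fin r → ℝ → ℝ, ∀ x, f x = ∑ i, g i (h i x)) :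
    ∀ p : Finset X, ¬ IsClosedPath h p := by
  classical
  rintro p ⟨lam, ⟨x₀, hx₀⟩, hne, hsum⟩
  obtain ⟨g, hg⟩ := H (fun x => if x = x₀ then 1 else 0)
  have key : ∑ x ∈ p, lam x * (∑ i, g i (h i x)) = 0 := by
    calc ∑ x ∈ p, lam x * (∑ i, g i (h i x))
        = ∑ x ∈ p, ∑ i, lam x * g i (h i x) := by
          simp [Finset.mul_sum]
      _ = ∑ i, ∑ x ∈ p, lam x * g i (h i x) := Finset.sum_comm
      _ = 0 := by
        refine Finset.sum_eq_zero fun i _ => ?_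
        have hmap : ∀ x ∈ p, h i x ∈ p.image (h i) := fun x hx =>
          Finset.mem_image_of_mem _ hx
        calc ∑ x ∈ p, lam x * g i (h i x)
            = ∑ t ∈ p.image (h i), ∑ x ∈ p.filter (fun x => h i x = t),
                lam x * g i (h i x) := (Finset.sum_fiberwise_of_maps_to hmap _).symm
          _ = 0 := by
              refine Finset.sum_eq_zero fun t _ => ?_
              have : ∑ x ∈ p.filter (fun x => h i x = t), lam x * g i (h i x)
                  = (∑ x ∈ p.filter (fun x => h i x = t), lam x) * g i t := by
                rw [Finset.sum_mul]
                refine Finset.sum_congr rfl fun x hx => ?_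
                rw [(Finset.mem_filter.mp hx).2]
              rw [this, hsum, zero_mul]
  have h2 : ∑ x ∈ p, lam x * (if x = x₀ then 1 else 0) = 0 := by
    calc ∑ x ∈ p, lam x * (if x = x₀ then 1 else 0)
        = ∑ x ∈ p, lam x * (∑ i, g i (h i x)) :=
          Finset.sum_congr rfl fun x _ => by rw [← hg x]
      _ = 0 := key
  have h3 : lam x₀ = 0 := by
    simpa [mul_ite, Finset.sum_ite_eq' p x₀ lam, hx₀] using h2
  exact hne x₀ hx₀ h3


end SuperAux

end SuperAux

/-- Theorem 2.6: `B(h_1,…,h_r;X) = T(X)` iff `X` has no closed paths. -/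
theorem superpositions_eq_all_iff_no_closedPath {X : Type*} {r : ℕ} (h : Fin r → X → ℝ) :
    (∀ f : X → ℝ, ∃ g : Fin r → ℝ → ℝ, ∀ x, f x = ∑ i, g i (h i x)) ↔
      ∀ p : Finset X, ¬ IsClosedPath h p := by
  constructor
  · exact SuperAux.noPath_of_rep h
  · intro H f
    exact SuperAux.rep_of_li h (SuperAux.li_of_noPath h H) f
end

section
/- Let X be a metric space and h_1,…,h_r : X → ℝ continuous functions. If every continuous function f : X → ℝ can be written as f = Σ_{i=1}^r g_i ∘ h_i with continuous g_1,…,g_r : ℝ → ℝ, then every function f : X → ℝ (with no continuity assumption) can be written as f = Σ_{i=1}^r g_i ∘ h_i for some (arbitrary) functions g_1,…,g_r : ℝ → ℝ. -/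
open Finsupp LinearMap

/-- If every continuous function on the metric space `X` is a sum `Σ g_i ∘ h_i` with
continuous `g_i`, then every function on `X` is such a sum with arbitrary `g_i`. -/
theorem all_superpositions_of_continuous_superpositions
    {X : Type*} [MetricSpace X] {r : ℕ} (h : Fin r → X → ℝ)
    (hc : ∀ i, Continuous (h i))
    (H : ∀ f : X → ℝ, Continuous f → ∃ g : Fin r → ℝ → ℝ,
      (∀ i, Continuous (g i)) ∧ ∀ x, f x = ∑ i, g i (h i x)) :
    ∀ f : X → ℝ, ∃ g : Fin r → ℝ → ℝ, ∀ x, f x = ∑ i, g i (h i x) := by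
  classical
  -- the linear map sending `δ_x` to `(δ_{h i x})_i`
  set S : (X →₀ ℝ) →ₗ[ℝ] (Fin r → (ℝ →₀ ℝ)) :=
    Finsupp.lsum ℝ (fun x => LinearMap.pi (fun i => Finsupp.lsingle (h i x))) with hS
  have hSsingle : ∀ x : X, S (Finsupp.single x 1) = fun i => Finsupp.single (h i x) 1 := by
    intro x
    funext i
    simp [hS]
  -- a "sum of compositions" functional on the target
  have key : ∀ (g : Fin r → ℝ → ℝ), ∃ ψ : Module.Dual ℝ (Fin r → (ℝ →₀ ℝ)),
      ∀ x : X, ψ (S (Finsupp.single x 1)) = ∑ i, g i (h i x) := by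
    intro g
    refine ⟨∑ i, (Finsupp.linearCombination ℝ (g i)).comp (LinearMap.proj i), fun x => ?_⟩
    rw [hSsingle x]
    simp [Finsupp.linearCombination_single]
  -- `S` is injective, thanks to `H`
  have hinj : Function.Injective S := by
    rw [← LinearMap.ker_eq_bot, LinearMap.ker_eq_bot']
    intro c hc0
    by_contra hcne
    obtain ⟨x₀, hx₀⟩ : ∃ x₀, x₀ ∈ c.support := by
      rcases Finset.nonempty_iff_ne_empty.mpr (fun he => hcne (Finsupp.support_eq_empty.mp he))
        with ⟨x₀, hx₀⟩
      exact ⟨x₀, hx₀⟩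
    -- a continuous function which is 1 at x₀ and 0 at the other support points
    have hclosed : IsClosed (↑(c.support.erase x₀) : Set X) := (c.support.erase x₀).finite_toSet.isClosed
    have hclosed' : IsClosed ({x₀} : Set X) := isClosed_singleton
    have hdisj : Disjoint (↑(c.support.erase x₀) : Set X) {x₀} := by
      simp [Set.disjoint_singleton_right]
    obtain ⟨f, hf0, hf1, -⟩ := exists_continuous_zero_one_of_isClosed hclosed hclosed' hdisj
    obtain ⟨g, -, hg⟩ := H f f.continuous
    obtain ⟨ψ, hψ⟩ := key g
    -- `ψ ∘ S` agrees with the functional `c ↦ Σ c x • f x`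
    have hcomp : ψ.comp S = Finsupp.linearCombination ℝ (f : X → ℝ) := by
      apply Finsupp.lhom_ext'
      intro x
      ext
      simp only [LinearMap.comp_apply, Finsupp.lsingle_apply,
        Finsupp.linearCombination_single, one_smul]
      rw [hψ x, ← hg x]
    have h1 : ψ (S c) = 0 := by rw [hc0]; simp
    have h2 : ψ (S c) = Finsupp.linearCombination ℝ (f : X → ℝ) c := by
      have := congrArg (fun φ => φ c) hcomp
      simpa using this
    have h3 : Finsupp.linearCombination ℝ (f : X → ℝ) c = c x₀ := by
      rw [Finsupp.linearCombination_apply, Finsupp.sum]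
      rw [Finset.sum_eq_single x₀]
      · rw [hf1 (by simp)]; simp
      · intro y hy hyne
        rw [hf0 (Finset.mem_erase.mpr ⟨hyne, hy⟩)]
        simp
      · intro hx; exact absurd hx₀ hx
    rw [h1, h3] at h2
    exact (Finsupp.mem_support_iff.mp hx₀) h2.symm
  -- hence the dual map of `S` is surjective
  have hsurj : Function.Surjective S.dualMap := LinearMap.dualMap_surjective_iff.mpr hinj
  intro f
  obtain ⟨ψ, hψ⟩ := hsurj (Finsupp.linearCombination ℝ f)
  refine ⟨fun i t => ψ (Pi.single i (Finsupp.single t 1)), fun x => ?_⟩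
  have h1 : ψ (S (Finsupp.single x 1)) = f x := by
    have := congrArg (fun φ => φ (Finsupp.single x 1)) hψ
    simpa [LinearMap.dualMap_apply] using this
  rw [← h1, hSsingle x]
  have h2 : (fun i => Finsupp.single (h i x) (1 : ℝ))
      = ∑ i, Pi.single i (Finsupp.single (h i x) (1 : ℝ)) := (Finset.univ_sum_single _).symm
  rw [h2, map_sum]
end

section
/- Let X be a set and h_1,…,h_r : X → ℝ fixed functions. If every bounded function f : X → ℝ can be written as f = Σ_{i=1}^r g_i ∘ h_i with bounded functions g_1,…,g_r : ℝ → ℝ, then every function f : X → ℝ can be written as f = Σ_{i=1}^r g_i ∘ h_i for some (arbitrary) functions g_1,…,g_r : ℝ → ℝ. -/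
/-- If every bounded function on `X` is a sum `Σ g_i ∘ h_i` with bounded `g_i`, then
every function on `X` is such a sum with arbitrary `g_i`. -/
theorem all_superpositions_of_bounded_superpositions
    {X : Type*} {r : ℕ} (h : Fin r → X → ℝ)
    (H : ∀ f : X → ℝ, (∃ C : ℝ, ∀ x, |f x| ≤ C) →
      ∃ g : Fin r → ℝ → ℝ, (∀ i, ∃ C : ℝ, ∀ t, |g i t| ≤ C) ∧ ∀ x, f x = ∑ i, g i (h i x)) :
    ∀ f : X → ℝ, ∃ g : Fin r → ℝ → ℝ, ∀ x, f x = ∑ i, g i (h i x) := by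
  classical
  intro f
  -- the "evaluation vector" of a point
  set φ : X → ((Fin r × ℝ) →₀ ℝ) :=
    fun x => ∑ i, Finsupp.single (i, h i x) 1 with hφdef
  -- evaluating a function tuple on φ x gives the superposition sum
  have eval : ∀ (g : Fin r → ℝ → ℝ) (x : X),
      Finsupp.linearCombination ℝ (fun p : Fin r × ℝ => g p.1 p.2) (φ x)
        = ∑ i, g i (h i x) := by
    intro g x
    rw [hφdef]
    simp [map_sum, Finsupp.linearCombination_single]
  -- the family φ is linearly independent, thanks to representability of indicators
  have hind : LinearIndependent ℝ φ := by
    rw [linearIndependent_iff]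
    intro l hl
    ext x0
    obtain ⟨g, -, hgf⟩ := H (fun x => if x = x0 then (1 : ℝ) else 0)
      ⟨1, by intro x; split <;> simp⟩
    rw [Finsupp.linearCombination_apply, Finsupp.sum] at hl
    have h2 := congrArg (Finsupp.linearCombination ℝ (fun p : Fin r × ℝ => g p.1 p.2)) hl
    rw [map_sum, map_zero] at h2
    have h3 : ∀ x ∈ l.support,
        (Finsupp.linearCombination ℝ (fun p : Fin r × ℝ => g p.1 p.2)) (l x • φ x)
          = if x = x0 then l x else 0 := by
      intro x _
      rw [map_smul, eval g x, ← hgf x]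
      split <;> simp
    rw [Finset.sum_congr rfl h3, Finset.sum_ite_eq' l.support x0 (fun x => l x)] at h2
    by_cases hx : x0 ∈ l.support
    · simpa [hx] using h2
    · simpa using Finsupp.notMem_support_iff.mp hx
  -- extend the functional `φ x ↦ f x` to the whole space
  obtain ⟨q, hq⟩ := Submodule.exists_isCompl (Submodule.span ℝ (Set.range φ))
  set π := Submodule.linearProjOfIsCompl _ q hq with hπdef
  set L : ((Fin r × ℝ) →₀ ℝ) →ₗ[ℝ] ℝ :=
    (Finsupp.linearCombination ℝ f) ∘ₗ (hind.repr : _ →ₗ[ℝ] (X →₀ ℝ)) ∘ₗ π with hLdef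
  refine ⟨fun i t => L (Finsupp.single (i, t) 1), fun x => ?_⟩
  have hm : φ x ∈ Submodule.span ℝ (Set.range φ) := Submodule.subset_span ⟨x, rfl⟩
  have hπ : π (φ x) = ⟨φ x, hm⟩ :=
    Submodule.linearProjOfIsCompl_apply_left hq ⟨φ x, hm⟩
  have hL : L (φ x) = f x := by
    rw [hLdef]
    dsimp only [LinearMap.coe_comp, Function.comp_apply]
    rw [hπ, hind.repr_eq_single x ⟨φ x, hm⟩ rfl, Finsupp.linearCombination_single, one_smul]
  calc f x = L (φ x) := hL.symm
    _ = ∑ i, L (Finsupp.single (i, h i x) 1) := by rw [hφdef]; simp [map_sum]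
    _ = ∑ i, (fun i t => L (Finsupp.single (i, t) 1)) i (h i x) := rfl
end

section
/- Corollary 3.2 (conditional form): Let d ≥ 2 and let s_q : [0,1]^d → ℝ, q = 1,…,2d+1, be functions of the form s_q(x_1,…,x_d) = Σ_{p=1}^d φ_pq(x_p) with each φ_pq : [0,1] → ℝ continuous. Suppose that every continuous function f : [0,1]^d → ℝ can be represented as f(x) = Σ_{q=1}^{2d+1} g_q(s_q(x)) with continuous g_q : ℝ → ℝ. Then every function f : [0,1]^d → ℝ (with no continuity assumption) can be represented as f(x) = Σ_{q=1}^{2d+1} g_q(s_q(x)) for some functions g_q : ℝ → ℝ depending on f. -/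
/-- Corollary 3.2 (conditional form): if the Kolmogorov superposition theorem holds for
continuous functions on the cube `[0,1]^d` with the inner functions
`s_q(x) = Σ_p φ_pq(x_p)`, then every (not necessarily continuous) function on the cube
admits the representation `f(x) = Σ_q g_q(s_q(x))`. -/
theorem kolmogorov_for_all_functions (d : ℕ) (hd : 2 ≤ d)
    (φ : Fin d → Fin (2 * d + 1) → Set.Icc (0 : ℝ) 1 → ℝ)
    (hφ : ∀ p q, Continuous (φ p q))
    (s : Fin (2 * d + 1) → Set.Icc (0 : Fin d → ℝ) 1 → ℝ)
    (hs : ∀ q x, s q x = ∑ p, φ p q ⟨x.val p, ⟨x.prop.1 p, x.prop.2 p⟩⟩)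
    (H : ∀ f : Set.Icc (0 : Fin d → ℝ) 1 → ℝ, Continuous f →
      ∃ g : Fin (2 * d + 1) → ℝ → ℝ, (∀ q, Continuous (g q)) ∧
        ∀ x, f x = ∑ q, g q (s q x)) :
    ∀ f : Set.Icc (0 : Fin d → ℝ) 1 → ℝ,
      ∃ g : Fin (2 * d + 1) → ℝ → ℝ, ∀ x, f x = ∑ q, g q (s q x) := by
  classical
  let r : Set.Icc (0 : Fin d → ℝ) 1 → ((ℝ × Fin (2 * d + 1)) →₀ ℝ) :=
    fun x => ∑ q, Finsupp.single (s q x, q) (1 : ℝ)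
  -- linear independence of the rows
  have hind : LinearIndependent ℝ r := by
    rw [linearIndependent_iff']
    intro t c hsum i hi
    -- build a continuous bump function
    set f : Set.Icc (0 : Fin d → ℝ) 1 → ℝ :=
      fun y => ∏ j ∈ t.erase i, dist y j / dist i j with hf
    have hfc : Continuous f := by
      apply continuous_finset_prod
      intro j _
      exact (continuous_id.dist continuous_const).div_const _
    have hfi : f i = 1 := by
      rw [hf]
      apply Finset.prod_eq_one
      intro j hj
      have : i ≠ j := fun h => (Finset.ne_of_mem_erase hj h.symm).elim
      exact div_self (dist_ne_zero.2 this)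
    have hfj : ∀ j ∈ t, j ≠ i → f j = 0 := by
      intro j hj hji
      rw [hf]
      apply Finset.prod_eq_zero (Finset.mem_erase.2 ⟨hji, hj⟩)
      simp
    obtain ⟨g, hgc, hg⟩ := H f hfc
    let T : ((ℝ × Fin (2 * d + 1)) →₀ ℝ) →ₗ[ℝ] ℝ :=
      Finsupp.linearCombination ℝ (fun p : ℝ × Fin (2 * d + 1) => g p.2 p.1)
    have hTr : ∀ x, T (r x) = f x := by
      intro x
      rw [hg x]
      simp only [r, T, map_sum, Finsupp.linearCombination_single, one_smul]
    have h0 : T (∑ x ∈ t, c x • r x) = 0 := by rw [hsum]; simp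
    rw [map_sum] at h0
    simp only [map_smul, hTr, smul_eq_mul] at h0
    rw [← Finset.add_sum_erase t _ hi] at h0
    rw [Finset.sum_eq_zero (fun j hj => by
      rw [hfj j (Finset.mem_of_mem_erase hj) (Finset.ne_of_mem_erase hj), mul_zero])] at h0
    rw [hfi, mul_one, add_zero] at h0
    exact h0
  intro f
  let Φ : ((Set.Icc (0 : Fin d → ℝ) 1) →₀ ℝ) →ₗ[ℝ] ((ℝ × Fin (2 * d + 1)) →₀ ℝ) :=
    Finsupp.linearCombination ℝ r
  have hinj : Function.Injective Φ := hind
  let e := LinearEquiv.ofInjective Φ hinj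
  let L1 : ((Set.Icc (0 : Fin d → ℝ) 1) →₀ ℝ) →ₗ[ℝ] ℝ := Finsupp.linearCombination ℝ f
  let L0 : LinearMap.range Φ →ₗ[ℝ] ℝ :=
    L1 ∘ₗ (e.symm : LinearMap.range Φ →ₗ[ℝ] ((Set.Icc (0 : Fin d → ℝ) 1) →₀ ℝ))
  obtain ⟨L, hL⟩ := LinearMap.exists_extend L0
  refine ⟨fun q t => L (Finsupp.single (t, q) 1), fun x => ?_⟩
  have hrx : r x = Φ (Finsupp.single x 1) := by
    simp [Φ, Finsupp.linearCombination_single]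
  have key : L (r x) = f x := by
    rw [hrx]
    have h1 : (⟨Φ (Finsupp.single x 1), LinearMap.mem_range_self Φ _⟩ : LinearMap.range Φ)
        = e (Finsupp.single x 1) := rfl
    calc L (Φ (Finsupp.single x 1))
        = L0 ⟨Φ (Finsupp.single x 1), LinearMap.mem_range_self Φ _⟩ := by
          rw [← hL]; rfl
      _ = L1 (e.symm (e (Finsupp.single x 1))) := by rw [h1]; rfl
      _ = L1 (Finsupp.single x 1) := by rw [e.symm_apply_apply]
      _ = f x := by simp [L1, Finsupp.linearCombination_single]
  rw [← key]
  simp only [r, map_sum]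
end

section
/- Property (a) of minimal closed paths: Let X be a set, h_1,…,h_r : X → ℝ fixed functions, and let p = {x_1,…,x_n} ⊆ X be a minimal closed path with respect to h_1,…,h_r. If λ = (λ_1,…,λ_n) and μ = (μ_1,…,μ_n) are two vectors of nonzero real numbers such that both ⟨p,λ⟩ and ⟨p,μ⟩ are closed path–vector pairs, then there exists a constant c ∈ ℝ with μ_j = c·λ_j for all j = 1,…,n. -/
open scoped Classical

/-- Property (a): the vector associated with a minimal closed path is unique up to a
multiplicative constant. -/
theorem minimal_closedPath_vector_unique {X : Type*} {r : ℕ} (h : Fin r → X → ℝ)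
    (p : Finset X) (hmin : IsMinimalClosedPath h p)
    (lam mu : X → ℝ) (hlam : ClosedPathPair h p lam) (hmu : ClosedPathPair h p mu) :
    ∃ c : ℝ, ∀ x ∈ p, mu x = c * lam x := by
  obtain ⟨hne, hlam0, hlamsum⟩ := hlam
  obtain ⟨-, hmu0, hmusum⟩ := hmu
  obtain ⟨x0, hx0⟩ := hne
  set c : ℝ := mu x0 / lam x0 with hc
  refine ⟨c, ?_⟩
  set ν : X → ℝ := fun x => mu x - c * lam x with hν
  have hsum : ∀ (i : Fin r) (t : ℝ),
      ∑ x ∈ p.filter (fun x => h i x = t), ν x = 0 := by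
    intro i t
    simp only [hν, Finset.sum_sub_distrib, ← Finset.mul_sum, hlamsum i t, hmusum i t,
      mul_zero, sub_zero]
  by_contra hcon
  push_neg at hcon
  set q : Finset X := p.filter (fun x => ν x ≠ 0) with hq
  have hqsub : q ⊆ p := Finset.filter_subset _ _
  have hx0q : x0 ∉ q := by
    simp only [hq, Finset.mem_filter, not_and, not_not]
    intro _
    have : lam x0 ≠ 0 := hlam0 x0 hx0
    simp only [hν, hc, div_mul_cancel₀ _ this, sub_self]
  have hqssub : q ⊂ p := ⟨hqsub, fun hsub => hx0q (hsub hx0)⟩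
  apply hmin.2 q hqssub
  refine ⟨ν, ?_, ?_, ?_⟩
  · obtain ⟨y, hy, hνy⟩ := hcon
    exact ⟨y, by simp [hq, hy, hν, sub_ne_zero.mpr hνy]⟩
  · intro x hx; exact (Finset.mem_filter.mp hx).2
  · intro i t
    rw [← hsum i t]
    have : q.filter (fun x => h i x = t)
        = (p.filter (fun x => h i x = t)).filter (fun x => ν x ≠ 0) := by
      simp [hq, Finset.filter_filter, and_comm]
    rw [this]
    exact Finset.sum_filter_ne_zero _
end

section
/- Property (b) of minimal closed paths: Let X be a set, h_1,…,h_r : X → ℝ fixed functions, and let p = {x_1,…,x_n} ⊆ X be a minimal closed path with associated vector λ = (λ_1,…,λ_n) of nonzero reals satisfying Σ_{j=1}^n |λ_j| = 1. Then every λ_j, j = 1,…,n, is a rational number. -/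
open scoped Classical

lemma aux_vanish {X : Type*} {r : ℕ} (h : Fin r → X → ℝ) (p : Finset X)
    (hmin : IsMinimalClosedPath h p) (nu : X → ℝ)
    (hnu : ∀ (i : Fin r) (t : ℝ), ∑ x ∈ p.filter (fun x => h i x = t), nu x = 0)
    (x0 : X) (hx0 : x0 ∈ p) (hnx0 : nu x0 = 0) : ∀ x ∈ p, nu x = 0 := by
  by_contra hc
  push_neg at hc
  obtain ⟨x1, hx1, hnx1⟩ := hc
  set q : Finset X := p.filter (fun x => nu x ≠ 0) with hq
  have hqsub : q ⊆ p := Finset.filter_subset _ _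
  have hx0q : x0 ∉ q := by simp [hq, hnx0]
  have hqss : q ⊂ p := Finset.ssubset_iff_of_subset hqsub |>.mpr ⟨x0, hx0, hx0q⟩
  apply hmin.2 q hqss
  refine ⟨nu, ⟨x1, by simp [hq, hx1, hnx1]⟩, fun x hx => (Finset.mem_filter.mp hx).2, ?_⟩
  intro i t
  have : q.filter (fun x => h i x = t) = (p.filter (fun x => h i x = t)).filter (fun x => nu x ≠ 0) := by
    simp [hq, Finset.filter_filter]
    congr 1
    ext x
    tauto
  rw [this, Finset.sum_filter_ne_zero]
  exact hnu i t

lemma aux_prop {X : Type*} {r : ℕ} (h : Fin r → X → ℝ) (p : Finset X)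
    (hmin : IsMinimalClosedPath h p) (lam : X → ℝ) (hlam : ClosedPathPair h p lam)
    (nu : X → ℝ)
    (hnu : ∀ (i : Fin r) (t : ℝ), ∑ x ∈ p.filter (fun x => h i x = t), nu x = 0)
    (x0 : X) (hx0 : x0 ∈ p) : ∀ x ∈ p, nu x = (nu x0 / lam x0) * lam x := by
  set c := nu x0 / lam x0 with hc
  have hl0 : lam x0 ≠ 0 := hlam.2.1 x0 hx0
  have := aux_vanish h p hmin (fun x => nu x - c * lam x)
    (by intro i t
        simp only [Finset.sum_sub_distrib, ← Finset.mul_sum, hnu i t, hlam.2.2 i t, mul_zero, sub_zero])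
    x0 hx0 (by rw [hc, div_mul_cancel₀ _ hl0, sub_self])
  intro x hx
  have h2 := this x hx
  have h2 : nu x - c * lam x = 0 := h2
  linarith

/-- Property (b): if the vector associated with a minimal closed path is normalized by
`Σ |λ_j| = 1`, then all its components are rational. -/
theorem minimal_closedPath_vector_rational {X : Type*} {r : ℕ} (h : Fin r → X → ℝ)
    (p : Finset X) (hmin : IsMinimalClosedPath h p)
    (lam : X → ℝ) (hlam : ClosedPathPair h p lam)
    (hnorm : ∑ x ∈ p, |lam x| = 1) :
    ∀ x ∈ p, ∃ q : ℚ, lam x = (q : ℝ) := by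
  classical
  set V := Submodule.span ℚ ((p.image lam : Finset ℝ) : Set ℝ) with hV
  haveI : FiniteDimensional ℚ V :=
    FiniteDimensional.span_of_finite ℚ (Finset.finite_toSet _)
  set vfun : X → V := fun x =>
    if hx : x ∈ p then ⟨lam x, Submodule.subset_span (by simp; exact ⟨x, hx, rfl⟩)⟩ else 0
    with hvfun
  have hv : ∀ x ∈ p, ((vfun x : ℝ)) = lam x := by
    intro x hx; simp [hvfun, hx]
  have hsum : ∀ (i : Fin r) (t : ℝ),
      ∑ x ∈ p.filter (fun x => h i x = t), vfun x = 0 := by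
    intro i t
    have hco : ((∑ x ∈ p.filter (fun x => h i x = t), vfun x : V) : ℝ) = 0 := by
      rw [AddSubmonoidClass.coe_finset_sum]
      rw [Finset.sum_congr rfl (fun x hx => hv x (Finset.filter_subset _ _ hx))]
      exact hlam.2.2 i t
    exact ZeroMemClass.coe_eq_zero.mp hco
  obtain ⟨x1, hx1⟩ := hlam.1
  have hl1 : lam x1 ≠ 0 := hlam.2.1 x1 hx1
  have hv1 : vfun x1 ≠ 0 := by
    intro h0
    apply hl1
    rw [← hv x1 hx1, h0]; simp
  set b := Module.finBasis ℚ V with hb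
  have hrepr1 : b.repr (vfun x1) ≠ 0 := by
    intro h0
    exact hv1 (b.repr.injective (by simp [h0]))
  obtain ⟨k, hk⟩ : ∃ k, b.repr (vfun x1) k ≠ 0 := by
    by_contra hcon; push_neg at hcon
    exact hrepr1 (Finsupp.ext hcon)
  set cq : X → ℚ := fun x => b.repr (vfun x) k with hcq
  set nu : X → ℝ := fun x => ((cq x : ℚ) : ℝ) with hnu
  have hnusum : ∀ (i : Fin r) (t : ℝ),
      ∑ x ∈ p.filter (fun x => h i x = t), nu x = 0 := by
    intro i t
    have h1 : ∑ x ∈ p.filter (fun x => h i x = t), b.repr (vfun x) = 0 := by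
      rw [← map_sum, hsum i t, map_zero]
    have h2 : ∑ x ∈ p.filter (fun x => h i x = t), cq x = 0 := by
      have h2 := DFunLike.congr_fun h1 k
      simpa [Finset.sum_apply'] using h2
    simp only [hnu]
    exact_mod_cast h2
  have hprop := aux_prop h p hmin lam hlam nu hnusum x1 hx1
  set c := nu x1 / lam x1 with hc
  have hnu1 : nu x1 ≠ 0 := by simpa [hnu] using hk
  have hcne : c ≠ 0 := div_ne_zero hnu1 hl1
  set Q : ℚ := ∑ x ∈ p, |cq x| with hQ
  have habs : |c| = (Q : ℝ) := by
    have : ∑ x ∈ p, |nu x| = |c| := by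
      rw [Finset.sum_congr rfl (fun x hx => by rw [hprop x hx])]
      simp only [abs_mul, ← Finset.mul_sum, hnorm, mul_one]
    rw [← this]
    push_cast [hQ]
    rfl
  intro x hx
  have hlx : lam x = nu x / c := by
    have := hprop x hx
    field_simp at this ⊢
    linarith
  have hQne : (Q : ℝ) ≠ 0 := by rw [← habs]; exact abs_ne_zero.mpr hcne
  rcases abs_cases c with ⟨h1, _⟩ | ⟨h1, _⟩
  · refine ⟨cq x / Q, ?_⟩
    rw [hlx, ← h1, habs]
    push_cast
    rfl
  · refine ⟨-(cq x) / Q, ?_⟩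
    have : c = -(Q : ℝ) := by rw [← habs]; linarith
    rw [hlx, this]
    push_cast
    rw [div_neg, neg_div]
end

section
/- Let X be a set, h_1,…,h_r : X → ℝ fixed functions, and let {x_1,…,x_n} ⊆ X be a closed path with respect to h_1,…,h_r, i.e., there exist nonzero real numbers λ_1,…,λ_n with Σ_{j : h_i(x_j)=t} λ_j = 0 for every i = 1,…,r and every t ∈ ℝ. Then there also exist nonzero integers m_1,…,m_n such that Σ_{j : h_i(x_j)=t} m_j = 0 for every i = 1,…,r and every t ∈ ℝ. -/
open scoped Classical

-- find a ℚ-linear functional nonzero on finitely many nonzero reals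
lemma exists_dual_ne_zero (p : Finset ℝ) (hp : ∀ x ∈ p, x ≠ 0) :
    ∃ f : Module.Dual ℚ ℝ, ∀ x ∈ p, f x ≠ 0 := by
  have hne : ⋃ H ∈ p.image (fun x => LinearMap.ker (Module.Dual.eval ℚ ℝ x)),
      (H : Set (Module.Dual ℚ ℝ)) ≠ Set.univ := by
    apply Subspace.biUnion_ne_univ_of_top_notMem
    intro htop
    obtain ⟨x, hx, hker⟩ := Finset.mem_image.mp htop
    have : x = 0 := by
      rw [← Module.forall_dual_apply_eq_zero_iff ℚ x]
      intro φ
      have : φ ∈ LinearMap.ker (Module.Dual.eval ℚ ℝ x) := hker ▸ Submodule.mem_top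
      simpa [Module.Dual.eval] using this
    exact hp x hx this
  obtain ⟨f, hf⟩ := Set.ne_univ_iff_exists_notMem _ |>.mp hne
  refine ⟨f, fun x hx hfx => hf ?_⟩
  refine Set.mem_biUnion (Finset.mem_image_of_mem _ hx) ?_
  simpa [Module.Dual.eval] using hfx


/-- A closed path always admits an associated vector with nonzero integer components. -/
theorem closedPath_integer_vector {X : Type*} {r : ℕ} (h : Fin r → X → ℝ)
    (p : Finset X) (lam : X → ℝ) (hp : ClosedPathPair h p lam) :
    ∃ m : X → ℤ, (∀ x ∈ p, m x ≠ 0) ∧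
      ∀ (i : Fin r) (t : ℝ), ∑ x ∈ p.filter (fun x => h i x = t), m x = 0 := by
  obtain ⟨-, hnz, heq⟩ := hp
  obtain ⟨f, hf⟩ := exists_dual_ne_zero (p.image lam) (by
    intro x hx
    obtain ⟨y, hy, rfl⟩ := Finset.mem_image.mp hx
    exact hnz y hy)
  have hfne : ∀ x ∈ p, f (lam x) ≠ 0 := fun x hx =>
    hf _ (Finset.mem_image_of_mem _ hx)
  set d : ℤ := ∏ x ∈ p, ((f (lam x)).den : ℤ) with hd
  have hdne : d ≠ 0 := Finset.prod_ne_zero_iff.mpr (fun x _ => by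
    exact_mod_cast (f (lam x)).den_nz)
  refine ⟨fun x => (f (lam x)).num * (d / ((f (lam x)).den : ℤ)), ?_, ?_⟩
  · intro x hx
    have hdvd : ((f (lam x)).den : ℤ) ∣ d := Finset.dvd_prod_of_mem _ hx
    refine mul_ne_zero (Rat.num_ne_zero.mpr (hfne x hx)) ?_
    intro h0
    have := Int.eq_mul_of_ediv_eq_right hdvd h0
    simp [this] at hdne
  · intro i t
    have key : ∀ x ∈ p.filter (fun x => h i x = t),
        (((f (lam x)).num * (d / ((f (lam x)).den : ℤ)) : ℤ) : ℚ) = (d : ℚ) * f (lam x) := by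
      intro x hx
      have hxp : x ∈ p := (Finset.mem_filter.mp hx).1
      have hdvd : ((f (lam x)).den : ℤ) ∣ d := Finset.dvd_prod_of_mem _ hxp
      obtain ⟨c, hc⟩ := hdvd
      have hden : ((f (lam x)).den : ℤ) ≠ 0 := by exact_mod_cast (f (lam x)).den_nz
      rw [hc, Int.mul_ediv_cancel_left _ hden]
      push_cast
      rw [mul_comm ((f (lam x)).den : ℚ) (c : ℚ), mul_assoc, mul_comm ((f (lam x)).den : ℚ),
        Rat.mul_den_eq_num]
      ring
    have : ((∑ x ∈ p.filter (fun x => h i x = t),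
        (f (lam x)).num * (d / ((f (lam x)).den : ℤ)) : ℤ) : ℚ) = 0 := by
      rw [Int.cast_sum, Finset.sum_congr rfl key, ← Finset.mul_sum, ← map_sum, heq i t]
      simp
    exact_mod_cast this
end

section
/- Let a^1,…,a^r ∈ ℝ^d \ {0}, let y ∈ ℝ^d, and let b^1,…,b^r ∈ ℝ^d satisfy a^i · b^i = 0 for i = 1,…,r. For each ε = (ε_1,…,ε_r) ∈ {0,1}^r put x_ε = y + Σ_{i=1}^r ε_i b^i, and assume the 2^r points x_ε are pairwise distinct. Then the set {x_ε : ε ∈ {0,1}^r} together with the weights λ_ε = (−1)^{ε_1+⋯+ε_r} is a closed path–vector pair with respect to the functions h_i(x) = a^i · x; that is, for every i = 1,…,r and every t ∈ ℝ, Σ_{ε : a^i · x_ε = t} (−1)^{ε_1+⋯+ε_r} = 0. -/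
/-- The points `x_ε = y + Σ ε_i b^i`, `ε ∈ {0,1}^r`, with weights `(−1)^{ε_1+⋯+ε_r}`,
form a closed path–vector pair with respect to the functions `x ↦ a^i · x`. -/
theorem cube_points_closedPath {d r : ℕ}
    (a : Fin r → Fin d → ℝ) (ha : ∀ i, a i ≠ 0)
    (y : Fin d → ℝ) (b : Fin r → Fin d → ℝ)
    (hab : ∀ i, ∑ k, a i k * b i k = 0)
    (xpt : (Fin r → Fin 2) → Fin d → ℝ)
    (hxpt : ∀ ε, xpt ε = fun k => y k + ∑ i, ((ε i : ℕ) : ℝ) * b i k)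
    (hinj : Function.Injective xpt) :
    ∀ (i : Fin r) (t : ℝ),
      ∑ ε ∈ Finset.univ.filter (fun ε : Fin r → Fin 2 => ∑ k, a i k * xpt ε k = t),
        (-1 : ℝ) ^ (∑ j, (ε j : ℕ)) = 0 := by
  intro i t
  classical
  -- the flip involution on coordinate i
  set g : (Fin r → Fin 2) → (Fin r → Fin 2) := fun ε => Function.update ε i (1 - ε i) with hg
  have hgg : ∀ ε, g (g ε) = ε := by
    intro ε
    funext j
    by_cases hj : j = i
    · subst hj; simp [hg, Function.update_self]
    · simp [hg, Function.update_of_ne hj]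
  have hgne : ∀ ε, g ε ≠ ε := by
    intro ε h
    have := congrFun h i
    simp [hg, Function.update_self] at this
    omega
  -- the linear functional value is invariant under the flip
  have hval : ∀ ε, ∑ k, a i k * xpt (g ε) k = ∑ k, a i k * xpt ε k := by
    intro ε
    simp only [hxpt]
    simp only [mul_add, Finset.sum_add_distrib, Finset.mul_sum]
    congr 1
    rw [Finset.sum_comm, Finset.sum_comm (s := Finset.univ) (t := Finset.univ)
      (f := fun k j => a i k * (((ε j : ℕ) : ℝ) * b j k))]
    apply Finset.sum_congr rfl
    intro j _
    by_cases hj : j = i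
    · subst hj
      have : ∀ c : ℝ, ∑ k, a j k * (c * b j k) = c * ∑ k, a j k * b j k := by
        intro c; rw [Finset.mul_sum]; apply Finset.sum_congr rfl; intro k _; ring
      rw [this, this, hab j, mul_zero, mul_zero]
    · simp [hg, Function.update_of_ne hj]
  -- the sign flips
  have hsign : ∀ ε : Fin r → Fin 2,
      (-1 : ℝ) ^ (∑ j, (ε j : ℕ)) + (-1 : ℝ) ^ (∑ j, ((g ε j : ℕ))) = 0 := by
    intro ε
    have h1 : ∑ j, ((g ε j : ℕ)) = (∑ j ∈ Finset.univ.erase i, (ε j : ℕ)) + ((1 - ε i : Fin 2) : ℕ) := by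
      rw [← Finset.sum_erase_add _ _ (Finset.mem_univ i)]
      congr 1
      · apply Finset.sum_congr rfl; intro j hj
        simp [hg, Function.update_of_ne (Finset.ne_of_mem_erase hj)]
      · simp [hg, Function.update_self]
    have h2 : ∑ j, (ε j : ℕ) = (∑ j ∈ Finset.univ.erase i, (ε j : ℕ)) + (ε i : ℕ) := by
      rw [← Finset.sum_erase_add _ _ (Finset.mem_univ i)]
    rw [h1, h2, pow_add, pow_add]
    have : ((ε i : ℕ) = 0 ∧ ((1 - ε i : Fin 2) : ℕ) = 1) ∨
        ((ε i : ℕ) = 1 ∧ ((1 - ε i : Fin 2) : ℕ) = 0) := by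
      omega
    rcases this with ⟨h3, h4⟩ | ⟨h3, h4⟩ <;> rw [h3, h4] <;> ring
  apply Finset.sum_involution (g := fun ε _ => g ε)
  · intro ε _; exact hsign ε
  · intro ε _ _; exact hgne ε
  · intro ε hε
    simp only [Finset.mem_filter, Finset.mem_univ, true_and] at hε ⊢
    rw [hval]; exact hε
  · intro ε _; exact hgg ε
end

section
/- NI-property characterization: Let a^1,…,a^r ∈ ℝ^d \ {0} be directions and x^1,…,x^k ∈ ℝ^d distinct points. The following are equivalent: (i) there exist α_1,…,α_k ∈ ℝ such that no function of the form f(x) = Σ_{i=1}^r g_i(a^i · x) (with arbitrary g_i : ℝ → ℝ) satisfies f(x^j) = α_j for all j = 1,…,k; (ii) there exists a nonzero vector m = (m_1,…,m_k) ∈ ℤ^k such that Σ_{j=1}^k m_j g(a^i · x^j) = 0 for every i = 1,…,r and every function g : ℝ → ℝ. -/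
open Finset

private lemma fiber_sum_zero {k : ℕ} (t : Fin k → ℝ) (m : Fin k → ℝ)
    (hS : ∀ j0 : Fin k, ∑ j ∈ univ.filter (fun j => t j = t j0), m j = 0)
    (g : ℝ → ℝ) : ∑ j, m j * g (t j) = 0 := by
  classical
  rw [← Finset.sum_fiberwise_of_maps_to (t := univ.image t)
      (fun j _ => mem_image_of_mem t (mem_univ j)) (fun j => m j * g (t j))]
  refine Finset.sum_eq_zero fun y hy => ?_
  obtain ⟨j0, -, rfl⟩ := mem_image.mp hy
  calc ∑ j ∈ univ.filter (fun j => t j = t j0), m j * g (t j)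
      = ∑ j ∈ univ.filter (fun j => t j = t j0), m j * g (t j0) := by
        refine sum_congr rfl fun j hj => ?_
        rw [(mem_filter.mp hj).2]
    _ = (∑ j ∈ univ.filter (fun j => t j = t j0), m j) * g (t j0) := by rw [sum_mul]
    _ = 0 := by rw [hS j0, zero_mul]

private lemma ridge_NI_aux {r k : ℕ} (t : Fin r → Fin k → ℝ) :
    (∃ α : Fin k → ℝ, ¬ ∃ g : Fin r → ℝ → ℝ, ∀ j, ∑ i, g i (t i j) = α j) ↔
      ∃ m : Fin k → ℤ, m ≠ 0 ∧ ∀ (i : Fin r) (g : ℝ → ℝ),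
        ∑ j, (m j : ℝ) * g (t i j) = 0 := by
  classical
  constructor
  · rintro ⟨α, hα⟩
    set u : Fin r × Fin k → (Fin k → ℚ) :=
      fun p j => if t p.1 j = t p.1 p.2 then 1 else 0 with hu
    by_cases hspan : Submodule.span ℚ (Set.range u) = ⊤
    · exfalso
      apply hα
      have hmem : ∀ j' : Fin k, ∃ c : Fin r × Fin k → ℚ,
          ∑ p, c p • u p = Pi.single j' (1 : ℚ) := fun j' => by
        rw [← Submodule.mem_span_range_iff_exists_fun, hspan]; trivial
      choose c hc using hmem
      set coeff : Fin r × Fin k → ℝ := fun p => ∑ j', α j' * (c j' p : ℝ) with hco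
      refine ⟨fun i s => ∑ j0, (if t i j0 = s then coeff (i, j0) else 0), fun j => ?_⟩
      have key : ∀ (j' : Fin k), ∑ p, (c j' p : ℝ) * (u p j : ℝ) =
          ((Pi.single j' (1 : ℚ) : Fin k → ℚ) j : ℝ) := by
        intro j'
        have := congrFun (hc j') j
        simp only [Finset.sum_apply, Pi.smul_apply, smul_eq_mul] at this
        exact_mod_cast congrArg (Rat.cast : ℚ → ℝ) this
      calc ∑ i, ∑ j0, (if t i j0 = t i j then coeff (i, j0) else 0)
          = ∑ p : Fin r × Fin k, coeff p * ((u p j : ℚ) : ℝ) := by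
            rw [Fintype.sum_prod_type]
            refine Finset.sum_congr rfl fun i _ => Finset.sum_congr rfl fun j0 _ => ?_
            by_cases h : t i j = t i j0
            · rw [if_pos h.symm]
              simp [hu, if_pos h]
            · have h' : ¬ t i j0 = t i j := fun hh => h hh.symm
              rw [if_neg h']
              simp [hu, if_neg h]
        _ = ∑ j', α j' * ∑ p : Fin r × Fin k, (c j' p : ℝ) * (u p j : ℝ) := by
            simp only [hco, Finset.sum_mul]
            rw [Finset.sum_comm]
            refine Finset.sum_congr rfl fun j' _ => ?_
            rw [Finset.mul_sum]
            exact Finset.sum_congr rfl fun p _ => by ring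
        _ = α j := by
            simp only [key]
            simp [Pi.single_apply, apply_ite (Rat.cast : ℚ → ℝ)]
    · have hlt : Submodule.span ℚ (Set.range u) < ⊤ := lt_top_iff_ne_top.mpr hspan
      obtain ⟨φ, hφ, hker⟩ := Submodule.exists_dual_map_eq_bot_of_lt_top hlt inferInstance
      set q : Fin k → ℚ := fun j => φ (fun j' => if j = j' then 1 else 0) with hq
      have hφv : ∀ v : Fin k → ℚ, φ v = ∑ j, v j * q j := by
        intro v
        rw [LinearMap.pi_apply_eq_sum_univ φ v]
        simp [hq, smul_eq_mul]
      have hqne : q ≠ 0 := by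
        intro h
        apply hφ
        refine LinearMap.ext fun v => ?_
        rw [hφv v, h]
        simp
      have hq0 : ∀ p : Fin r × Fin k, ∑ j, u p j * q j = 0 := by
        intro p
        have hup : φ (u p) = 0 := by
          have : φ (u p) ∈ Submodule.map φ (Submodule.span ℚ (Set.range u)) :=
            Submodule.mem_map_of_mem (Submodule.subset_span (Set.mem_range_self p))
          rw [hker] at this
          exact (Submodule.mem_bot ℚ).mp this
        rw [hφv] at hup
        exact hup
      -- clear denominators
      set m : Fin k → ℤ := fun j => (q j).num * ∏ j' ∈ univ.erase j, ((q j').den : ℤ) with hm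
      have hmq : ∀ j, (m j : ℚ) = q j * ∏ j', ((q j').den : ℚ) := by
        intro j
        rw [← Finset.mul_prod_erase univ (fun j' => ((q j').den : ℚ)) (mem_univ j),
          ← mul_assoc, Rat.mul_den_eq_num]
        push_cast [hm]
        ring
      refine ⟨m, ?_, ?_⟩
      · obtain ⟨j, hj⟩ := Function.ne_iff.mp hqne
        intro h
        have := congrFun h j
        simp only [hm, Pi.zero_apply, mul_eq_zero] at this
        rcases this with h1 | h1
        · exact hj (Rat.num_eq_zero.mp h1)
        · rw [Finset.prod_eq_zero_iff] at h1
          obtain ⟨j', -, hj'⟩ := h1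
          exact (q j').den_nz (by exact_mod_cast hj')
      · intro i g
        refine fiber_sum_zero (t i) (fun j => (m j : ℝ)) (fun j0 => ?_) g
        have hz : ∑ j ∈ univ.filter (fun j => t i j = t i j0), (m j : ℚ) = 0 := by
          simp only [hmq]
          rw [← Finset.sum_mul]
          have : ∑ j ∈ univ.filter (fun j => t i j = t i j0), q j = 0 := by
            have := hq0 (i, j0)
            simp only [hu] at this
            rw [← this, Finset.sum_filter]
            refine Finset.sum_congr rfl fun j _ => ?_
            by_cases h : t i j = t i j0 <;> simp [h]
          rw [this, zero_mul]
        have := congrArg (fun z : ℚ => (z : ℝ)) hz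
        push_cast at this
        exact this
  · rintro ⟨m, hm, hcond⟩
    refine ⟨fun j => (m j : ℝ), fun ⟨g, hg⟩ => ?_⟩
    have h1 : ∑ j, (m j : ℝ) * (m j : ℝ) = 0 := by
      calc ∑ j, (m j : ℝ) * (m j : ℝ)
          = ∑ j, (m j : ℝ) * ∑ i, g i (t i j) := by
            refine Finset.sum_congr rfl fun j _ => by rw [hg j]
        _ = ∑ i, ∑ j, (m j : ℝ) * g i (t i j) := by
            rw [Finset.sum_comm]
            simp_rw [Finset.mul_sum]
        _ = 0 := Finset.sum_eq_zero fun i _ => hcond i (g i)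
    have h2 : ∑ j, (m j : ℝ) * (m j : ℝ) > 0 := by
      obtain ⟨j, hj⟩ := Function.ne_iff.mp hm
      refine Finset.sum_pos' (fun j' _ => mul_self_nonneg _) ⟨j, mem_univ j, ?_⟩
      exact mul_self_pos.mpr (Int.cast_ne_zero.mpr hj)
    linarith

/-- NI-property characterization: the points `x^1,…,x^k` admit non-interpolable data with
respect to sums of ridge functions in the directions `a^1,…,a^r` iff there is a nonzero
integer vector `m` with `Σ_j m_j g(a^i · x^j) = 0` for all `i` and all `g : ℝ → ℝ`. -/
theorem NI_property_iff_integer_vector {d r k : ℕ}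
    (a : Fin r → Fin d → ℝ) (ha : ∀ i, a i ≠ 0)
    (x : Fin k → Fin d → ℝ) (hx : Function.Injective x) :
    (∃ α : Fin k → ℝ, ¬ ∃ g : Fin r → ℝ → ℝ,
        ∀ j, ∑ i, g i (∑ l, a i l * x j l) = α j) ↔
      ∃ m : Fin k → ℤ, m ≠ 0 ∧ ∀ (i : Fin r) (g : ℝ → ℝ),
        ∑ j, (m j : ℝ) * g (∑ l, a i l * x j l) = 0 :=
  ridge_NI_aux (fun i j => ∑ l, a i l * x j l)
end

section
/- Let a^1, a^2 ∈ ℝ^2 be linearly independent vectors, let v ∈ ℝ^2 \ {0} satisfy a^1 · v ≠ 0 and a^2 · v ≠ 0, and let L_1, L_2 be two distinct parallel lines in ℝ^2 with direction vector v (i.e., L_k = {c_k + t v : t ∈ ℝ} with c_1 − c_2 not a multiple of v). Put X = L_1 ∪ L_2. Then X has no closed paths with respect to the functions h_1(x) = a^1 · x, h_2(x) = a^2 · x, and consequently every function f : X → ℝ can be written as f(x) = g_1(a^1 · x) + g_2(a^2 · x) for some g_1, g_2 : ℝ → ℝ. -/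
open scoped Classical

/-- Solve the cohomological equation `G (s + δ) = G s + F s` for `δ ≠ 0`. -/
lemma exists_cocycle_solution (F : ℝ → ℝ) (δ : ℝ) (hδ : δ ≠ 0) :
    ∃ G : ℝ → ℝ, ∀ s, G (s + δ) = G s + F s := by
  set D : ℝ → ℤ → ℝ := fun b n =>
    (∑ k ∈ Finset.Ico (0:ℤ) n, F (b + (k:ℝ) * δ)) -
      ∑ k ∈ Finset.Ico n (0:ℤ), F (b + (k:ℝ) * δ) with hDdef
  have hD : ∀ (b : ℝ) (n : ℤ), D b (n+1) = D b n + F (b + (n:ℝ) * δ) := by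
    intro b n
    rcases le_or_gt 0 n with h | h
    · have h1 : Finset.Ico (n+1) (0:ℤ) = ∅ := Finset.Ico_eq_empty (by omega)
      have h2 : Finset.Ico n (0:ℤ) = ∅ := Finset.Ico_eq_empty (by omega)
      have h3 : Finset.Ico (0:ℤ) (n+1) = insert n (Finset.Ico (0:ℤ) n) :=
        Finset.ext fun m => by simp only [Finset.mem_Ico, Finset.mem_insert]; omega
      have h4 : n ∉ Finset.Ico (0:ℤ) n := by simp
      simp only [hDdef, h1, h2, h3, Finset.sum_empty, sub_zero, Finset.sum_insert h4]
      ring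
    · have h1 : Finset.Ico (0:ℤ) (n+1) = ∅ := Finset.Ico_eq_empty (by omega)
      have h2 : Finset.Ico (0:ℤ) n = ∅ := Finset.Ico_eq_empty (by omega)
      have h3 : Finset.Ico n (0:ℤ) = insert n (Finset.Ico (n+1) (0:ℤ)) :=
        Finset.ext fun m => by simp only [Finset.mem_Ico, Finset.mem_insert]; omega
      have h4 : n ∉ Finset.Ico (n+1) (0:ℤ) := by simp
      simp only [hDdef, h1, h2, h3, Finset.sum_empty, zero_sub, Finset.sum_insert h4]
      ring
  refine ⟨fun s => D (s - (⌊s/δ⌋ : ℝ) * δ) ⌊s/δ⌋, fun s => ?_⟩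
  have hfloor : ⌊(s+δ)/δ⌋ = ⌊s/δ⌋ + 1 := by
    rw [add_div, div_self hδ, Int.floor_add_one]
  have hb : (s+δ) - (⌊(s+δ)/δ⌋ : ℝ) * δ = s - (⌊s/δ⌋ : ℝ) * δ := by
    rw [hfloor]; push_cast; ring
  show D ((s+δ) - (⌊(s+δ)/δ⌋ : ℝ) * δ) ⌊(s+δ)/δ⌋ = D _ _ + F s
  rw [hb, hfloor, hD]
  congr 1
  ring

/-- Two parallel lines in `ℝ²`, not perpendicular to either of the two given directions,
contain no closed paths; hence every function on their union is a sum of two ridge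
functions. -/
theorem two_parallel_lines_no_closedPath
    (a1 a2 : Fin 2 → ℝ) (hind : LinearIndependent ℝ ![a1, a2])
    (v : Fin 2 → ℝ) (hv : v ≠ 0)
    (hv1 : ∑ k, a1 k * v k ≠ 0) (hv2 : ∑ k, a2 k * v k ≠ 0)
    (c1 c2 : Fin 2 → ℝ) (hc : ∀ t : ℝ, c1 - c2 ≠ t • v)
    (X : Set (Fin 2 → ℝ))
    (hX : X = {z | ∃ t : ℝ, z = c1 + t • v} ∪ {z | ∃ t : ℝ, z = c2 + t • v}) :
    (∀ p : Finset (Fin 2 → ℝ), ↑p ⊆ X →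
      ¬ IsClosedPath ![fun z => ∑ k, a1 k * z k, fun z => ∑ k, a2 k * z k] p) ∧
    ∀ f : X → ℝ, ∃ g1 g2 : ℝ → ℝ, ∀ x : X,
      f x = g1 (∑ k, a1 k * (x : Fin 2 → ℝ) k) + g2 (∑ k, a2 k * (x : Fin 2 → ℝ) k) := by
  subst hX
  set β1 : ℝ := ∑ k, a1 k * v k with hβ1
  set β2 : ℝ := ∑ k, a2 k * v k with hβ2
  set A1 : ℝ := ∑ k, a1 k * c1 k with hA1
  set A2 : ℝ := ∑ k, a2 k * c1 k with hA2
  set B1 : ℝ := ∑ k, a1 k * c2 k with hB1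
  set B2 : ℝ := ∑ k, a2 k * c2 k with hB2
  set d1 : ℝ := (A1 - B1) / β1 with hd1
  set d2 : ℝ := (A2 - B2) / β2 with hd2
  set δ : ℝ := d1 - d2 with hδdef
  -- evaluation of the linear forms on the lines
  have hval : ∀ (a c : Fin 2 → ℝ) (t : ℝ),
      (∑ k, a k * (c + t • v) k) = (∑ k, a k * c k) + t * (∑ k, a k * v k) := by
    intro a c t
    simp only [Fin.sum_univ_two, Pi.add_apply, Pi.smul_apply, smul_eq_mul]
    ring
  -- injectivity of the parametrization of each line
  have hparam : ∀ (c : Fin 2 → ℝ) (t t' : ℝ), c + t • v = c + t' • v → t = t' := by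
    intro c t t' h
    have h2 : (t - t') • v = 0 := by
      rw [sub_smul, sub_eq_zero]
      exact add_left_cancel h
    rcases smul_eq_zero.mp h2 with h3 | h3
    · linarith [sub_eq_zero.mp (by exact_mod_cast h3)]
    · exact absurd h3 hv
  -- the shift δ is nonzero
  have hδ : δ ≠ 0 := by
    intro h0
    have hdd : d1 = d2 := by rw [hδdef] at h0; linarith [sub_eq_zero.mp h0]
    set w : Fin 2 → ℝ := fun k => c1 k - c2 k - d1 * v k with hw
    have hw1 : a1 0 * w 0 + a1 1 * w 1 = 0 := by
      have hAB : A1 - B1 = d1 * β1 := by rw [hd1]; field_simp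
      simp only [hw]
      have e1 : A1 = a1 0 * c1 0 + a1 1 * c1 1 := by rw [hA1, Fin.sum_univ_two]
      have e2 : B1 = a1 0 * c2 0 + a1 1 * c2 1 := by rw [hB1, Fin.sum_univ_two]
      have e3 : β1 = a1 0 * v 0 + a1 1 * v 1 := by rw [hβ1, Fin.sum_univ_two]
      rw [e1, e2, e3] at hAB
      nlinarith [hAB]
    have hw2 : a2 0 * w 0 + a2 1 * w 1 = 0 := by
      have hAB : A2 - B2 = d2 * β2 := by rw [hd2]; field_simp
      simp only [hw]
      have e1 : A2 = a2 0 * c1 0 + a2 1 * c1 1 := by rw [hA2, Fin.sum_univ_two]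
      have e2 : B2 = a2 0 * c2 0 + a2 1 * c2 1 := by rw [hB2, Fin.sum_univ_two]
      have e3 : β2 = a2 0 * v 0 + a2 1 * v 1 := by rw [hβ2, Fin.sum_univ_two]
      rw [e1, e2, e3, ← hdd] at hAB
      nlinarith [hAB]
    -- determinant is nonzero
    have hpair : ∀ s t : ℝ, s • a1 + t • a2 = 0 → s = 0 ∧ t = 0 :=
      fun s t hst => LinearIndependent.pair_iff.mp hind s t hst
    have hdet : a1 0 * a2 1 - a1 1 * a2 0 ≠ 0 := by
      intro hD0
      have h1 := hpair (a2 1) (-(a1 1)) (by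
        funext k
        fin_cases k <;>
          simp only [Fin.mk_zero, Fin.mk_one, Fin.isValue, Pi.add_apply, Pi.smul_apply,
            smul_eq_mul, Pi.zero_apply, neg_smul, Pi.neg_apply, neg_mul]
        · linear_combination hD0
        · ring)
      obtain ⟨ha21, ha11⟩ := h1
      have ha11' : a1 1 = 0 := by linarith [neg_eq_zero.mp ha11]
      have h2 := hpair (a2 0) (-(a1 0)) (by
        funext k
        fin_cases k <;>
          simp only [Fin.mk_zero, Fin.mk_one, Fin.isValue, Pi.add_apply, Pi.smul_apply,
            smul_eq_mul, Pi.zero_apply, neg_smul, Pi.neg_apply, neg_mul]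
        · ring
        · linear_combination a2 0 * ha11' - a1 0 * ha21)
      obtain ⟨ha20, ha10⟩ := h2
      have ha10' : a1 0 = 0 := by linarith [neg_eq_zero.mp ha10]
      have h3 := hpair 1 0 (by
        funext k
        fin_cases k <;>
          simp only [Fin.mk_zero, Fin.mk_one, Fin.isValue, Pi.add_apply, Pi.smul_apply,
            smul_eq_mul, Pi.zero_apply, one_mul, zero_mul, add_zero] <;>
          simp [ha10', ha11'])
      exact one_ne_zero h3.1
    have hw0 : w 0 = 0 := by
      have : w 0 * (a1 0 * a2 1 - a1 1 * a2 0) = 0 := by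
        linear_combination a2 1 * hw1 - a1 1 * hw2
      rcases mul_eq_zero.mp this with h | h
      · exact h
      · exact absurd h hdet
    have hw1' : w 1 = 0 := by
      have : w 1 * (a1 0 * a2 1 - a1 1 * a2 0) = 0 := by
        linear_combination a1 0 * hw2 - a2 0 * hw1
      rcases mul_eq_zero.mp this with h | h
      · exact h
      · exact absurd h hdet
    apply hc d1
    funext k
    have hk : w k = 0 := by fin_cases k <;> assumption
    simp only [hw] at hk
    simp only [Pi.sub_apply, Pi.smul_apply, smul_eq_mul]
    linarith [hk]
  constructor
  · -- no closed paths
    rintro p hp ⟨lam, hne, hlam, hsum⟩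
    have hsum0 : ∀ t : ℝ, ∑ x ∈ p.filter (fun x => (∑ k, a1 k * x k) = t), lam x = 0 := by
      intro t
      have := hsum 0 t
      simpa using this
    have hsum1 : ∀ t : ℝ, ∑ x ∈ p.filter (fun x => (∑ k, a2 k * x k) = t), lam x = 0 := by
      intro t
      have := hsum 1 t
      simpa using this
    have partner : ∀ (H : (Fin 2 → ℝ) → ℝ),
        (∀ t : ℝ, ∑ x ∈ p.filter (fun x => H x = t), lam x = 0) →
        ∀ x ∈ p, ∃ y ∈ p, y ≠ x ∧ H y = H x := by
      intro H hH x hx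
      by_contra hcon
      push_neg at hcon
      have hfil : p.filter (fun y => H y = H x) = {x} := by
        ext y
        simp only [Finset.mem_filter, Finset.mem_singleton]
        constructor
        · rintro ⟨hy, hHy⟩
          by_contra hne'
          exact hcon y hy hne' hHy
        · rintro rfl
          exact ⟨hx, rfl⟩
      have := hH (H x)
      rw [hfil, Finset.sum_singleton] at this
      exact hlam x hx this
    -- stepping lemma
    have key : ∀ t : ℝ, c1 + t • v ∈ p → c1 + (t + δ) • v ∈ p := by
      intro t hx
      obtain ⟨y, hyp, hyne, hyH⟩ :=
        partner (fun z => ∑ k, a1 k * z k) hsum0 (c1 + t • v) hx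
      have hyH' : (∑ k, a1 k * y k) = ∑ k, a1 k * (c1 + t • v) k := hyH
      have hyX := hp hyp
      rcases hyX with ⟨s, rfl⟩ | ⟨s, rfl⟩
      · exfalso
        rw [hval, hval, ← hA1, ← hβ1] at hyH'
        have : s = t := by
          have := mul_right_cancel₀ hv1 (by linarith : s * β1 = t * β1)
          exact this
        exact hyne (by rw [this])
      · rw [hval, hval, ← hA1, ← hB1, ← hβ1] at hyH'
        have hs : s = t + d1 := by
          rw [hd1]
          field_simp
          linarith
        obtain ⟨z, hzp, hzne, hzH⟩ :=
          partner (fun z => ∑ k, a2 k * z k) hsum1 (c2 + s • v) hyp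
        have hzH' : (∑ k, a2 k * z k) = ∑ k, a2 k * (c2 + s • v) k := hzH
        have hzX := hp hzp
        rcases hzX with ⟨u, rfl⟩ | ⟨u, rfl⟩
        · rw [hval, hval, ← hA2, ← hB2, ← hβ2] at hzH'
          have hu2 : u = s - d2 := by
            rw [hd2]
            field_simp
            linarith
          have hu : u = t + δ := by
            rw [hδdef, hu2, hs]
            ring
          rwa [hu] at hzp
        · exfalso
          rw [hval, hval, ← hB2, ← hβ2] at hzH'
          have : u = s := mul_right_cancel₀ hv2 (by linarith : u * β2 = s * β2)
          exact hzne (by rw [this])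
    -- get a starting point on line 1
    obtain ⟨x0, hx0⟩ := hne
    have hx0X := hp hx0
    have hstart : ∃ t0 : ℝ, c1 + t0 • v ∈ p := by
      rcases hx0X with ⟨t, rfl⟩ | ⟨s, rfl⟩
      · exact ⟨t, hx0⟩
      · obtain ⟨y, hyp, hyne, hyH⟩ :=
          partner (fun z => ∑ k, a1 k * z k) hsum0 (c2 + s • v) hx0
        have hyH' : (∑ k, a1 k * y k) = ∑ k, a1 k * (c2 + s • v) k := hyH
        have hyX := hp hyp
        rcases hyX with ⟨t, rfl⟩ | ⟨s', rfl⟩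
        · exact ⟨t, hyp⟩
        · exfalso
          rw [hval, hval, ← hB1, ← hβ1] at hyH'
          have : s' = s := mul_right_cancel₀ hv1 (by linarith : s' * β1 = s * β1)
          exact hyne (by rw [this])
    obtain ⟨t0, ht0⟩ := hstart
    -- build an infinite family inside p
    have hmem : ∀ n : ℕ, c1 + (t0 + n * δ) • v ∈ p := by
      intro n
      induction n with
      | zero => simpa using ht0
      | succ n ih =>
        have := key (t0 + n * δ) ih
        have harg : t0 + (n+1 : ℕ) * δ = (t0 + n * δ) + δ := by push_cast; ring
        rwa [harg]
    have hinj : Function.Injective (fun n : ℕ => c1 + (t0 + n * δ) • v) := by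
      intro n m hnm
      have := hparam c1 _ _ hnm
      have h2 : (n : ℝ) * δ = (m : ℝ) * δ := by linarith
      have h3 : (n : ℝ) = m := mul_right_cancel₀ hδ h2
      exact_mod_cast h3
    have hinf : (↑p : Set (Fin 2 → ℝ)).Infinite :=
      Set.infinite_of_injective_forall_mem hinj (fun n => hmem n)
    exact p.finite_toSet.not_infinite hinf
  · -- representation by ridge functions
    intro f
    set ftil : (Fin 2 → ℝ) → ℝ := fun z => if hz : z ∈ ({z | ∃ t : ℝ, z = c1 + t • v} ∪ {z | ∃ t : ℝ, z = c2 + t • v}) then f ⟨z, hz⟩ else 0 with hftil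
    set f1 : ℝ → ℝ := fun t => ftil (c1 + t • v) with hf1
    set f2 : ℝ → ℝ := fun t => ftil (c2 + t • v) with hf2
    obtain ⟨G, hG⟩ := exists_cocycle_solution (fun s => f2 (s + d1) - f1 s) δ hδ
    refine ⟨fun u => f1 ((u - A1)/β1) - G ((u - A1)/β1), fun u => G ((u - A2)/β2),
      fun x => ?_⟩
    have hxX := x.2
    have hfx : ftil (x : Fin 2 → ℝ) = f x := by
      rw [hftil]
      simp only [x.2, dif_pos]
    simp only [Set.mem_union, Set.mem_setOf_eq] at hxX
    rcases hxX with ⟨t, hxt⟩ | ⟨t, hxt⟩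
    · have hs1 : (∑ k, a1 k * (x : Fin 2 → ℝ) k) = A1 + t * β1 := by
        simp only [hxt]
        rw [hval, ← hA1, ← hβ1]
      have hs2 : (∑ k, a2 k * (x : Fin 2 → ℝ) k) = A2 + t * β2 := by
        simp only [hxt]
        rw [hval, ← hA2, ← hβ2]
      have e1 : (A1 + t * β1 - A1)/β1 = t := by field_simp; ring
      have e2 : (A2 + t * β2 - A2)/β2 = t := by field_simp; ring
      have hfx1 : f1 t = f x := by
        rw [show f1 t = ftil (c1 + t • v) from rfl, ← hxt]
        exact hfx
      simp only [hs1, hs2, e1, e2]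
      rw [hfx1]
      ring
    · have hs1 : (∑ k, a1 k * (x : Fin 2 → ℝ) k) = B1 + t * β1 := by
        simp only [hxt]
        rw [hval, ← hB1, ← hβ1]
      have hs2 : (∑ k, a2 k * (x : Fin 2 → ℝ) k) = B2 + t * β2 := by
        simp only [hxt]
        rw [hval, ← hB2, ← hβ2]
      have e1 : (B1 + t * β1 - A1)/β1 = t - d1 := by
        rw [hd1]; field_simp; ring
      have e2 : (B2 + t * β2 - A2)/β2 = t - d2 := by
        rw [hd2]; field_simp; ring
      have e3 : t - d2 = (t - d1) + δ := by rw [hδdef]; ring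
      have hfx2 : f2 t = f x := by
        rw [show f2 t = ftil (c2 + t • v) from rfl, ← hxt]
        exact hfx
      simp only [hs1, hs2, e1, e2]
      rw [e3, hG]
      have e4 : t - d1 + d1 = t := by ring
      rw [e4, hfx2]
      ring
end

section
/- Let X be a set and h_1,…,h_r : X → ℝ fixed functions such that for every x ∈ X there exists an index i ∈ {1,…,r} with {y ∈ X : h_i(y) = h_i(x)} = {x} (i.e., at least one of the level sets of the h_i through x meets X only at x). Then X has no closed paths with respect to h_1,…,h_r, and consequently every function f : X → ℝ can be written as f(x) = Σ_{i=1}^r g_i(h_i(x)) for some g_1,…,g_r : ℝ → ℝ. -/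
open scoped Classical

/-- Example (4), abstract form: if through every point of `X` at least one level set of
some `h_i` meets `X` only in that point, then `X` has no closed paths and every function
on `X` is a sum `Σ g_i ∘ h_i`. -/
theorem no_closedPath_of_separating_level_sets {X : Type*} {r : ℕ} (h : Fin r → X → ℝ)
    (hsep : ∀ x : X, ∃ i : Fin r, ∀ y : X, h i y = h i x → y = x) :
    (∀ p : Finset X, ¬ IsClosedPath h p) ∧
    ∀ f : X → ℝ, ∃ g : Fin r → ℝ → ℝ, ∀ x, f x = ∑ i, g i (h i x) := by
  classical
  set ind : X → Fin r := fun x => (hsep x).choose with hind_def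
  have hind : ∀ x : X, ∀ y : X, h (ind x) y = h (ind x) x → y = x :=
    fun x => (hsep x).choose_spec
  constructor
  · rintro p ⟨lam, hne, hnz, hsum⟩
    obtain ⟨x, hx⟩ := hne
    have hfilter : p.filter (fun y => h (ind x) y = h (ind x) x) = {x} := by
      ext y
      simp only [Finset.mem_filter, Finset.mem_singleton]
      constructor
      · rintro ⟨-, hy⟩; exact hind x y hy
      · rintro rfl; exact ⟨hx, rfl⟩
    have := hsum (ind x) (h (ind x) x)
    rw [hfilter, Finset.sum_singleton] at this
    exact hnz x hx this
  · intro f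
    refine ⟨fun i t => if hx : ∃ x, ind x = i ∧ h i x = t then f hx.choose else 0, ?_⟩
    intro x
    rw [Finset.sum_eq_single (ind x)]
    · have he : ∃ y, ind y = ind x ∧ h (ind x) y = h (ind x) x := ⟨x, rfl, rfl⟩
      simp only
      rw [dif_pos he]
      obtain ⟨-, hy2⟩ := he.choose_spec
      rw [hind x _ hy2]
    · intro i _ hi
      simp only
      rw [dif_neg]
      rintro ⟨y, rfl, hy⟩
      have : x = y := hind y x hy.symm
      exact hi (this ▸ rfl)
    · intro hmem; exact absurd (Finset.mem_univ _) hmem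
end
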